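/- arXiv:2204.07694 — 4 statements merged into one kernel-verified Lean document; each statement's English description precedes it below -/
import Mathlib

section
/- Variational formula for the sandwiched Rényi trace functional: let σ, τ be positive definite density matrices on a finite-dimensional complex Hilbert space and let α ∈ (0,1). Then the supremum of Tr(η σ^{1/2} τ^{−α} σ^{1/2}) over all positive semidefinite matrices η with Tr(η^{1/α}) = 1 equals (Tr[(τ^{−α/2} σ τ^{−α/2})^{1/(1−α)}])^{1−α}. -/
open Matrix
open scoped Kronecker ComplexOrder

/-- Real power of a Hermitian matrix via the spectral functional calculus
(junk value `0` on non-Hermitian matrices). -/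
noncomputable def mpow {m : Type*} [Fintype m] [DecidableEq m]
    (A : Matrix m m ℂ) (r : ℝ) : Matrix m m ℂ :=
  if hA : A.IsHermitian then
    (hA.eigenvectorUnitary : Matrix m m ℂ) *
      Matrix.diagonal (fun i => ((hA.eigenvalues i ^ r : ℝ) : ℂ)) *
      (star (hA.eigenvectorUnitary : Matrix m m ℂ))
  else 0

/-- Logarithm of a Hermitian matrix via the spectral functional calculus
(junk value `0` on non-Hermitian matrices). -/
noncomputable def mlog {m : Type*} [Fintype m] [DecidableEq m]
    (A : Matrix m m ℂ) : Matrix m m ℂ :=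
  if hA : A.IsHermitian then
    (hA.eigenvectorUnitary : Matrix m m ℂ) *
      Matrix.diagonal (fun i => ((Real.log (hA.eigenvalues i) : ℝ) : ℂ)) *
      (star (hA.eigenvectorUnitary : Matrix m m ℂ))
  else 0

/-- A density matrix: positive semidefinite with unit trace. -/
def IsDensity {m : Type*} [Fintype m] [DecidableEq m] (A : Matrix m m ℂ) : Prop :=
  A.PosSemidef ∧ A.trace = 1

/-- Sandwiched Rényi relative entropy
`S_n(ρ‖σ) = (n-1)⁻¹ log Tr[(σ^{(1-n)/(2n)} ρ σ^{(1-n)/(2n)})^n]`. -/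
noncomputable def SRenyi {m : Type*} [Fintype m] [DecidableEq m]
    (n : ℝ) (ρ σ : Matrix m m ℂ) : ℝ :=
  (n - 1)⁻¹ *
    Real.log ((mpow (mpow σ ((1 - n) / (2 * n)) * ρ * mpow σ ((1 - n) / (2 * n))) n).trace.re)

/-- Quantum relative entropy `S(ρ‖σ) = Tr(ρ log ρ) - Tr(ρ log σ)`. -/
noncomputable def relEnt {m : Type*} [Fintype m] [DecidableEq m]
    (ρ σ : Matrix m m ℂ) : ℝ :=
  ((ρ * mlog ρ).trace - (ρ * mlog σ).trace).re

/-- von Neumann entropy `S(τ) = -Tr(τ log τ)`. -/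
noncomputable def vnEnt {m : Type*} [Fintype m] [DecidableEq m]
    (τ : Matrix m m ℂ) : ℝ :=
  -((τ * mlog τ).trace.re)

section SRenyiAuxSection

open Polynomial

namespace SRenyiAux


variable {m : Type*} [Fintype m] [DecidableEq m]

/-- Conjugation by a unitary matrix, as an algebra homomorphism. -/
noncomputable def conjAH (U : Matrix m m ℂ) (hU : U ∈ Matrix.unitaryGroup m ℂ) :
    Matrix m m ℂ →ₐ[ℂ] Matrix m m ℂ where
  toFun B := U * B * star U
  map_one' := by
    show U * 1 * star U = 1
    rw [mul_one]
    exact (Matrix.mem_unitaryGroup_iff).mp hU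
  map_mul' B C := by
    have h : star U * U = 1 := (Matrix.mem_unitaryGroup_iff').mp hU
    show U * (B * C) * star U = (U * B * star U) * (U * C * star U)
    calc (U * (B * C)) * star U = U * B * ((star U * U) * (C * star U)) := by
          rw [h, one_mul]; simp only [Matrix.mul_assoc]
      _ = (U * B * star U) * (U * C * star U) := by simp only [Matrix.mul_assoc]
  map_zero' := by simp
  map_add' B C := by
    show U * (B + C) * star U = U * B * star U + U * C * star U
    rw [Matrix.mul_add, Matrix.add_mul]
  commutes' r := by
    show U * algebraMap ℂ (Matrix m m ℂ) r * star U = _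
    rw [Algebra.algebraMap_eq_smul_one, Matrix.mul_smul, Matrix.mul_one, Matrix.smul_mul,
      (Matrix.mem_unitaryGroup_iff).mp hU]

theorem aeval_conj (U : Matrix m m ℂ) (hU : U ∈ Matrix.unitaryGroup m ℂ)
    (d : m → ℂ) (p : ℂ[X]) :
    Polynomial.aeval (U * Matrix.diagonal d * star U) p =
      U * Matrix.diagonal (fun i => Polynomial.eval (d i) p) * star U := by
  have h1 : U * Matrix.diagonal d * star U = conjAH U hU (Matrix.diagonalAlgHom ℂ d) := rfl
  rw [h1, Polynomial.aeval_algHom_apply, Polynomial.aeval_algHom_apply]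
  have h2 : Polynomial.aeval d p = fun i => Polynomial.eval (d i) p := by
    funext i
    simp
  rw [h2]
  rfl


theorem mpow_def {A : Matrix m m ℂ} (hA : A.IsHermitian) (r : ℝ) :
    mpow A r = (hA.eigenvectorUnitary : Matrix m m ℂ) *
      Matrix.diagonal (fun i => ((hA.eigenvalues i ^ r : ℝ) : ℂ)) *
      (star (hA.eigenvectorUnitary : Matrix m m ℂ)) := by
  rw [mpow, dif_pos hA]

theorem spectral (hA : (A : Matrix m m ℂ).IsHermitian) :
    A = (hA.eigenvectorUnitary : Matrix m m ℂ) *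
      Matrix.diagonal (fun i => ((hA.eigenvalues i : ℝ) : ℂ)) *
      (star (hA.eigenvectorUnitary : Matrix m m ℂ)) := by
  have := hA.spectral_theorem
  convert this using 3
  simp [Unitary.conjStarAlgAut_apply]
  rfl

/-- Well-definedness of the matrix power functional calculus. -/
theorem mpow_eq_conj_diag {A : Matrix m m ℂ} (hA : A.IsHermitian)
    {U : Matrix m m ℂ} (hU : U ∈ Matrix.unitaryGroup m ℂ) {d : m → ℝ}
    (h : A = U * Matrix.diagonal (fun i => ((d i : ℝ) : ℂ)) * star U) (r : ℝ) :
    mpow A r = U * Matrix.diagonal (fun i => ((d i ^ r : ℝ) : ℂ)) * star U := by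
  classical
  set s : Finset ℝ := Finset.image d Finset.univ ∪ Finset.image hA.eigenvalues Finset.univ with hs
  set p : Polynomial ℝ := Lagrange.interpolate s id (fun x => x ^ r) with hpdef
  have hp : ∀ x ∈ s, p.eval x = x ^ r := fun x hx =>
    Lagrange.eval_interpolate_at_node _ (Set.injOn_id _) hx
  set q : Polynomial ℂ := p.map (algebraMap ℝ ℂ) with hqdef
  have hq : ∀ x ∈ s, q.eval ((x : ℝ) : ℂ) = ((x ^ r : ℝ) : ℂ) := by
    intro x hx
    rw [hqdef, Polynomial.eval_map,
      show ((x : ℂ)) = algebraMap ℝ ℂ x from rfl, Polynomial.eval₂_hom, hp x hx]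
    rfl
  have key1 : Polynomial.aeval A q =
      U * Matrix.diagonal (fun i => ((d i ^ r : ℝ) : ℂ)) * star U := by
    rw [h, aeval_conj U hU]
    have : (fun i => Polynomial.eval ((d i : ℂ)) q) = fun i => ((d i ^ r : ℝ) : ℂ) :=
      funext fun i => hq (d i)
        (Finset.mem_union_left _ (Finset.mem_image_of_mem d (Finset.mem_univ i)))
    rw [this]
  have key2 : Polynomial.aeval A q = mpow A r := by
    rw [mpow_def hA]
    conv_lhs => rw [spectral hA]
    rw [aeval_conj _ (hA.eigenvectorUnitary).2]
    have : (fun i => Polynomial.eval ((hA.eigenvalues i : ℂ)) q) =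
        fun i => ((hA.eigenvalues i ^ r : ℝ) : ℂ) :=
      funext fun i => hq _
        (Finset.mem_union_right _ (Finset.mem_image_of_mem _ (Finset.mem_univ i)))
    rw [this]
  rw [← key2, key1]


variable {U V : Matrix m m ℂ}

theorem diag_real_conjT (d : m → ℝ) :
    (Matrix.diagonal (fun i => ((d i : ℝ) : ℂ)))ᴴ =
      Matrix.diagonal (fun i => ((d i : ℝ) : ℂ)) := by
  rw [Matrix.diagonal_conjTranspose]
  have : (star fun i => ((d i : ℝ) : ℂ)) = fun i => ((d i : ℝ) : ℂ) := by
    funext i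
    simp
  rw [this]

theorem conj_diag_mul (hU : U ∈ Matrix.unitaryGroup m ℂ) (a b : m → ℂ) :
    (U * Matrix.diagonal a * star U) * (U * Matrix.diagonal b * star U) =
      U * Matrix.diagonal (fun i => a i * b i) * star U := by
  have h : star U * U = 1 := (Matrix.mem_unitaryGroup_iff').mp hU
  calc (U * Matrix.diagonal a * star U) * (U * Matrix.diagonal b * star U)
      = U * Matrix.diagonal a * ((star U * U) * (Matrix.diagonal b * star U)) := by
        simp only [Matrix.mul_assoc]
    _ = U * (Matrix.diagonal a * Matrix.diagonal b) * star U := by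
        rw [h, one_mul]; simp only [Matrix.mul_assoc]
    _ = _ := by rw [Matrix.diagonal_mul_diagonal]

theorem trace_conj (hU : U ∈ Matrix.unitaryGroup m ℂ) (X : Matrix m m ℂ) :
    (U * X * star U).trace = X.trace := by
  rw [Matrix.trace_mul_cycle, (Matrix.mem_unitaryGroup_iff').mp hU, one_mul]

theorem trace_conj_diag (hU : U ∈ Matrix.unitaryGroup m ℂ) (c : m → ℂ) :
    (U * Matrix.diagonal c * star U).trace = ∑ i, c i := by
  rw [trace_conj hU, Matrix.trace_diagonal]

theorem isHermitian_conj_diag (d : m → ℝ) :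
    (U * Matrix.diagonal (fun i => ((d i : ℝ) : ℂ)) * star U).IsHermitian := by
  show _ᴴ = _
  rw [Matrix.conjTranspose_mul, Matrix.conjTranspose_mul, diag_real_conjT,
    Matrix.star_eq_conjTranspose U, Matrix.conjTranspose_conjTranspose, Matrix.mul_assoc]

theorem posSemidef_conj_diag {d : m → ℝ} (hd : ∀ i, 0 ≤ d i) :
    (U * Matrix.diagonal (fun i => ((d i : ℝ) : ℂ)) * star U).PosSemidef := by
  have h1 : Matrix.diagonal (fun i => ((Real.sqrt (d i) : ℝ) : ℂ)) *
      Matrix.diagonal (fun i => ((Real.sqrt (d i) : ℝ) : ℂ)) =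
      Matrix.diagonal (fun i => ((d i : ℝ) : ℂ)) := by
    rw [Matrix.diagonal_mul_diagonal]
    exact congrArg _ (funext fun i => by
      rw [← Complex.ofReal_mul, Real.mul_self_sqrt (hd i)])
  have h3 : U * Matrix.diagonal (fun i => ((d i : ℝ) : ℂ)) * star U =
      (Matrix.diagonal (fun i => ((Real.sqrt (d i) : ℝ) : ℂ)) * star U)ᴴ *
        (Matrix.diagonal (fun i => ((Real.sqrt (d i) : ℝ) : ℂ)) * star U) := by
    rw [Matrix.conjTranspose_mul, diag_real_conjT, Matrix.star_eq_conjTranspose,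
      Matrix.conjTranspose_conjTranspose, ← h1]
    simp only [Matrix.mul_assoc]
  rw [h3]
  exact Matrix.posSemidef_conjTranspose_mul_self _

theorem sum_normSq_row (hU : U ∈ Matrix.unitaryGroup m ℂ) (i : m) :
    ∑ j, Complex.normSq (U i j) = 1 := by
  have h : (U * star U) i i = 1 := by
    rw [(Matrix.mem_unitaryGroup_iff).mp hU, Matrix.one_apply_eq]
  rw [Matrix.mul_apply] at h
  have h2 : ∑ j, ((Complex.normSq (U i j) : ℝ) : ℂ) = ((1 : ℝ) : ℂ) := by
    rw [Complex.ofReal_one, ← h]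
    refine Finset.sum_congr rfl fun j _ => ?_
    rw [Matrix.star_eq_conjTranspose, Matrix.conjTranspose_apply, ← Complex.mul_conj]
    rfl
  rw [← Complex.ofReal_sum] at h2
  exact_mod_cast h2

theorem sum_normSq_col (hU : U ∈ Matrix.unitaryGroup m ℂ) (j : m) :
    ∑ i, Complex.normSq (U i j) = 1 := by
  have h : (star U * U) j j = 1 := by
    rw [(Matrix.mem_unitaryGroup_iff').mp hU, Matrix.one_apply_eq]
  rw [Matrix.mul_apply] at h
  have h2 : ∑ i, ((Complex.normSq (U i j) : ℝ) : ℂ) = ((1 : ℝ) : ℂ) := by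
    rw [Complex.ofReal_one, ← h]
    refine Finset.sum_congr rfl fun i _ => ?_
    rw [Matrix.star_eq_conjTranspose, Matrix.conjTranspose_apply, mul_comm, ← Complex.mul_conj]
    rfl
  rw [← Complex.ofReal_sum] at h2
  exact_mod_cast h2

theorem trace_conj_mul_conj (hU : U ∈ Matrix.unitaryGroup m ℂ)
    (hV : V ∈ Matrix.unitaryGroup m ℂ) (a b : m → ℝ) :
    ((U * Matrix.diagonal (fun i => ((a i : ℝ) : ℂ)) * star U) *
      (V * Matrix.diagonal (fun i => ((b i : ℝ) : ℂ)) * star V)).trace.re =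
    ∑ i, ∑ j, a i * b j * Complex.normSq ((star U * V) i j) := by
  set W := star U * V with hW
  set Da := Matrix.diagonal (fun i => ((a i : ℝ) : ℂ)) with hDa
  set Db := Matrix.diagonal (fun i => ((b i : ℝ) : ℂ)) with hDb
  have huu : U * star U = 1 := (Matrix.mem_unitaryGroup_iff).mp hU
  have hWstar : star W = star V * U := by rw [hW, Matrix.star_mul, star_star]
  have h1 : (U * Da * star U) * (V * Db * star V) =
      U * (Da * (W * (Db * star W))) * star U := by
    rw [hWstar, hW]
    simp only [Matrix.mul_assoc]
    rw [huu, Matrix.mul_one]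
  rw [h1, trace_conj hU]
  have h2 : (Da * (W * (Db * star W))).trace =
      ∑ i, ∑ j, ((a i * b j * Complex.normSq (W i j) : ℝ) : ℂ) := by
    rw [Matrix.trace]
    refine Finset.sum_congr rfl fun i _ => ?_
    rw [Matrix.diag_apply, Matrix.diagonal_mul, Matrix.mul_apply, Finset.mul_sum]
    refine Finset.sum_congr rfl fun j _ => ?_
    rw [Matrix.diagonal_mul, Matrix.star_eq_conjTranspose, Matrix.conjTranspose_apply]
    have hc : (W i j) * star (W i j) = ((Complex.normSq (W i j) : ℝ) : ℂ) := by
      rw [Complex.star_def, Complex.mul_conj]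
    calc ((a i : ℝ) : ℂ) * (W i j * (((b j : ℝ) : ℂ) * star (W i j)))
        = ((a i : ℝ) : ℂ) * ((b j : ℝ) : ℂ) * (W i j * star (W i j)) := by ring
      _ = ((a i * b j * Complex.normSq (W i j) : ℝ) : ℂ) := by rw [hc]; push_cast; ring
  rw [h2]
  have h4 : (∑ i, ∑ j, ((a i * b j * Complex.normSq (W i j) : ℝ) : ℂ)) =
      ((∑ i, ∑ j, (a i * b j * Complex.normSq (W i j)) : ℝ) : ℂ) := by
    push_cast
    ring
  rw [h4, Complex.ofReal_re]


theorem det_conj (hU : U ∈ Matrix.unitaryGroup m ℂ) (X : Matrix m m ℂ) :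
    (U * X * star U).det = X.det := by
  have h1 : U.det * (star U).det = 1 := by
    rw [← Matrix.det_mul, (Matrix.mem_unitaryGroup_iff).mp hU, Matrix.det_one]
  rw [Matrix.det_mul, Matrix.det_mul]
  calc U.det * X.det * (star U).det = X.det * (U.det * (star U).det) := by ring
    _ = X.det := by rw [h1, mul_one]

end SRenyiAux

end SRenyiAuxSection

/-- variational formula for the sandwiched Rényi trace functional:
`sup {Tr(η σ^{1/2} τ^{-α} σ^{1/2}) : η ⪰ 0, Tr(η^{1/α}) = 1}
  = (Tr[(τ^{-α/2} σ τ^{-α/2})^{1/(1-α)}])^{1-α}`. -/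
theorem srenyi_variational {m : Type*} [Fintype m] [DecidableEq m]
    (σ τ : Matrix m m ℂ) (hσ : IsDensity σ) (hτ : IsDensity τ)
    (hσpd : σ.PosDef) (hτpd : τ.PosDef)
    (α : ℝ) (hα : α ∈ Set.Ioo (0 : ℝ) 1) :
    sSup ((fun η : Matrix m m ℂ =>
        ((η * mpow σ (1 / 2) * mpow τ (-α) * mpow σ (1 / 2)).trace.re)) ''
        {η | η.PosSemidef ∧ (mpow η (1 / α)).trace = 1}) =
      ((mpow (mpow τ (-(α / 2)) * σ * mpow τ (-(α / 2))) (1 / (1 - α))).trace.re) ^ (1 - α) := by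
  classical
  obtain ⟨hα0, hα1⟩ := hα
  have h1α : (0:ℝ) < 1 - α := by linarith
  have hσh : σ.IsHermitian := hσpd.1
  set Uσ : Matrix m m ℂ := (hσh.eigenvectorUnitary : Matrix m m ℂ) with hUσdef
  have hUσ : Uσ ∈ Matrix.unitaryGroup m ℂ := (hσh.eigenvectorUnitary).2
  set ν : m → ℝ := hσh.eigenvalues with hνdef
  have hν : ∀ i, 0 < ν i := fun i => hσpd.eigenvalues_pos i
  have hτh : τ.IsHermitian := hτpd.1
  set Uτ : Matrix m m ℂ := (hτh.eigenvectorUnitary : Matrix m m ℂ) with hUτdef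
  have hUτ : Uτ ∈ Matrix.unitaryGroup m ℂ := (hτh.eigenvectorUnitary).2
  set κ : m → ℝ := hτh.eigenvalues with hκdef
  have hκ : ∀ i, 0 < κ i := fun i => hτpd.eigenvalues_pos i
  set P : Matrix m m ℂ := mpow σ (1 / 2) with hPdef
  set Qα : Matrix m m ℂ := mpow τ (-α) with hQαdef
  set Q : Matrix m m ℂ := mpow τ (-(α / 2)) with hQdef
  have hPform : P = Uσ * Matrix.diagonal (fun i => ((ν i ^ ((1:ℝ) / 2) : ℝ) : ℂ)) * star Uσ :=
    SRenyiAux.mpow_def hσh _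
  have hQform : Q = Uτ * Matrix.diagonal (fun i => ((κ i ^ (-(α / 2)) : ℝ) : ℂ)) * star Uτ :=
    SRenyiAux.mpow_def hτh _
  have hQαform : Qα = Uτ * Matrix.diagonal (fun i => ((κ i ^ (-α) : ℝ) : ℂ)) * star Uτ :=
    SRenyiAux.mpow_def hτh _
  have hPherm : P.IsHermitian := by rw [hPform]; exact SRenyiAux.isHermitian_conj_diag _
  have hQherm : Q.IsHermitian := by rw [hQform]; exact SRenyiAux.isHermitian_conj_diag _
  have hPP : P * P = σ := by
    rw [hPform, SRenyiAux.conj_diag_mul hUσ]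
    have h : (fun i => ((ν i ^ ((1:ℝ) / 2) : ℝ) : ℂ) * ((ν i ^ ((1:ℝ) / 2) : ℝ) : ℂ)) =
        fun i => ((ν i : ℝ) : ℂ) := by
      funext i
      rw [← Complex.ofReal_mul, ← Real.rpow_add (hν i)]
      norm_num
    rw [h]
    exact (SRenyiAux.spectral hσh).symm
  have hQQ : Q * Q = Qα := by
    rw [hQform, hQαform, SRenyiAux.conj_diag_mul hUτ]
    have h : (fun i => ((κ i ^ (-(α / 2)) : ℝ) : ℂ) * ((κ i ^ (-(α / 2)) : ℝ) : ℂ)) =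
        fun i => ((κ i ^ (-α) : ℝ) : ℂ) := by
      funext i
      rw [← Complex.ofReal_mul, ← Real.rpow_add (hκ i),
        show -(α / 2) + -(α / 2) = -α by ring]
    rw [h]
  set Y : Matrix m m ℂ := Q * P with hYdef
  have hYH : Yᴴ = P * Q := by rw [hYdef, Matrix.conjTranspose_mul, hPherm, hQherm]
  set M : Matrix m m ℂ := P * Qα * P with hMdef
  have hMY : M = Yᴴ * Y := by
    rw [hYH, hYdef, hMdef, ← hQQ]
    simp only [Matrix.mul_assoc]
  have hMh : M.IsHermitian := by rw [hMY]; exact Matrix.isHermitian_conjTranspose_mul_self Y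
  have hMpsd : M.PosSemidef := by rw [hMY]; exact Matrix.posSemidef_conjTranspose_mul_self Y
  set V : Matrix m m ℂ := (hMh.eigenvectorUnitary : Matrix m m ℂ) with hVdef
  have hV : V ∈ Matrix.unitaryGroup m ℂ := (hMh.eigenvectorUnitary).2
  set lam : m → ℝ := hMh.eigenvalues with hlamdef
  have hlam0 : ∀ i, 0 ≤ lam i := fun i => hMpsd.eigenvalues_nonneg i
  -- positivity of the eigenvalues of M
  have hdetY : Y.det ≠ 0 := by
    rw [hYdef, Matrix.det_mul, hQform, hPform, SRenyiAux.det_conj hUτ, SRenyiAux.det_conj hUσ,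
      Matrix.det_diagonal, Matrix.det_diagonal]
    refine mul_ne_zero (Finset.prod_ne_zero_iff.mpr fun i _ => ?_)
      (Finset.prod_ne_zero_iff.mpr fun i _ => ?_)
    · exact_mod_cast (Real.rpow_pos_of_pos (hκ i) _).ne'
    · exact_mod_cast (Real.rpow_pos_of_pos (hν i) _).ne'
  have hdetM : M.det ≠ 0 := by
    rw [hMY, Matrix.det_mul, Matrix.det_conjTranspose]
    exact mul_ne_zero (star_ne_zero.mpr hdetY) hdetY
  have hlam : ∀ i, 0 < lam i := by
    intro i
    rcases (hlam0 i).lt_or_eq with h | h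
    · exact h
    · exfalso
      apply hdetM
      rw [hMh.det_eq_prod_eigenvalues]
      refine Finset.prod_eq_zero (Finset.mem_univ i) ?_
      rw [← hlamdef, ← h]
      simp
  set T : ℝ := ∑ i, lam i ^ ((1:ℝ) / (1 - α)) with hTdef
  -- empty case
  rcases isEmpty_or_nonempty m with hm | hm
  · have hS : {η : Matrix m m ℂ | η.PosSemidef ∧ (mpow η (1 / α)).trace = 1} = ∅ := by
      ext η
      simp only [Set.mem_setOf_eq, Set.mem_empty_iff_false, iff_false, not_and]
      intro _
      have h0 : (mpow η (1 / α)).trace = 0 := by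
        rw [Matrix.trace]
        simp
      rw [h0]
      exact fun h => one_ne_zero h.symm
    rw [hS, Set.image_empty, Real.sSup_empty]
    have h0 : (mpow (Q * σ * Q) (1 / (1 - α))).trace = 0 := by
      rw [Matrix.trace]
      simp
    rw [h0, Complex.zero_re, Real.zero_rpow (ne_of_gt h1α)]
  -- main case
  have hT0 : 0 < T :=
    Finset.sum_pos (fun i _ => Real.rpow_pos_of_pos (hlam i) _) Finset.univ_nonempty
  -- the matrix N on the right-hand side
  have hNY : Q * σ * Q = Y * Yᴴ := by
    rw [hYH, hYdef, ← hPP]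
    simp only [Matrix.mul_assoc]
  have hNh : (Q * σ * Q).IsHermitian := by
    rw [hNY]; exact Matrix.isHermitian_mul_conjTranspose_self Y
  set Z : Matrix m m ℂ := Y * V with hZdef
  set D2 : Matrix m m ℂ := Matrix.diagonal (fun i => ((lam i ^ (-((1:ℝ)/2)) : ℝ) : ℂ)) with hD2def
  set W : Matrix m m ℂ := Z * D2 with hWdef
  have hsD2 : star D2 = D2 := by
    rw [hD2def, Matrix.star_eq_conjTranspose]
    exact SRenyiAux.diag_real_conjT _
  have hsZ : star Z = star V * Yᴴ := by
    rw [hZdef, Matrix.star_mul, Matrix.star_eq_conjTranspose Y]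
  have hVMV : star V * M * V = Matrix.diagonal (fun i => ((lam i : ℝ) : ℂ)) := by
    conv_lhs => rw [SRenyiAux.spectral hMh]
    have h1 : star V * V = 1 := (Matrix.mem_unitaryGroup_iff').mp hV
    calc star V * ((V * Matrix.diagonal (fun i => ((lam i : ℝ) : ℂ))) * star V) * V
        = (star V * V) * (Matrix.diagonal (fun i => ((lam i : ℝ) : ℂ)) * ((star V) * V)) := by
          simp only [Matrix.mul_assoc]
      _ = Matrix.diagonal (fun i => ((lam i : ℝ) : ℂ)) := by
          rw [h1, one_mul, Matrix.mul_one]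
  have hZZ : star Z * Z = Matrix.diagonal (fun i => ((lam i : ℝ) : ℂ)) := by
    rw [hsZ, hZdef, ← hVMV, hMY]
    simp only [Matrix.mul_assoc]
  have hD2lamD2 : D2 * Matrix.diagonal (fun i => ((lam i : ℝ) : ℂ)) * D2 = 1 := by
    rw [hD2def, Matrix.diagonal_mul_diagonal, Matrix.diagonal_mul_diagonal]
    have h : (fun i => ((lam i ^ (-((1:ℝ)/2)) : ℝ) : ℂ) * ((lam i : ℝ) : ℂ) *
        ((lam i ^ (-((1:ℝ)/2)) : ℝ) : ℂ)) = fun _ => (1 : ℂ) := by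
      funext i
      rw [← Complex.ofReal_mul, ← Complex.ofReal_mul]
      have : lam i ^ (-((1:ℝ)/2)) * lam i * lam i ^ (-((1:ℝ)/2)) = 1 := by
        rw [mul_comm (lam i ^ (-((1:ℝ)/2))) (lam i), mul_assoc, ← Real.rpow_add (hlam i)]
        rw [show (-((1:ℝ)/2) + -((1:ℝ)/2)) = (-1 : ℝ) by norm_num,
          Real.rpow_neg (hlam i).le, Real.rpow_one]
        exact mul_inv_cancel₀ (hlam i).ne'
      rw [this, Complex.ofReal_one]
    rw [h, Matrix.diagonal_one]
  have hsW : star W = D2 * star Z := by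
    rw [hWdef]
    conv_lhs => rw [Matrix.star_mul]
    rw [hsD2]
  have hWW : star W * W = 1 := by
    rw [hsW, hWdef]
    calc (D2 * star Z) * (Z * D2) = D2 * (star Z * Z) * D2 := by simp only [Matrix.mul_assoc]
      _ = 1 := by rw [hZZ, hD2lamD2]
  have hWmem : W ∈ Matrix.unitaryGroup m ℂ := (Matrix.mem_unitaryGroup_iff').mpr hWW
  have hNW : Q * σ * Q = W * Matrix.diagonal (fun i => ((lam i : ℝ) : ℂ)) * star W := by
    have hVV : V * star V = 1 := (Matrix.mem_unitaryGroup_iff).mp hV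
    calc Q * σ * Q = Y * Yᴴ := hNY
      _ = Z * star Z := by
          rw [hsZ, hZdef]
          calc Y * Yᴴ = Y * (V * star V) * Yᴴ := by rw [hVV, Matrix.mul_one]
            _ = Y * V * (star V * Yᴴ) := by simp only [Matrix.mul_assoc]
      _ = Z * (D2 * Matrix.diagonal (fun i => ((lam i : ℝ) : ℂ)) * D2) * star Z := by
          rw [hD2lamD2, Matrix.mul_one]
      _ = W * Matrix.diagonal (fun i => ((lam i : ℝ) : ℂ)) * star W := by
          rw [hsW, hWdef]
          simp only [Matrix.mul_assoc]
  have hNre : (mpow (Q * σ * Q) (1 / (1 - α))).trace.re = T := by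
    rw [SRenyiAux.mpow_eq_conj_diag hNh hWmem hNW, SRenyiAux.trace_conj_diag hWmem,
      ← Complex.ofReal_sum, Complex.ofReal_re, hTdef]
  rw [hNre]
  -- the trace formula for mpow M
  have hMform : M = V * Matrix.diagonal (fun i => ((lam i : ℝ) : ℂ)) * star V :=
    SRenyiAux.spectral hMh
  apply IsGreatest.csSup_eq
  constructor
  · -- membership : the optimizer
    set d : m → ℝ := fun i => T ^ (-α) * lam i ^ (α / (1 - α)) with hddef
    have hd0 : ∀ i, 0 ≤ d i := fun i =>
      mul_nonneg (Real.rpow_nonneg hT0.le _) (Real.rpow_nonneg (hlam0 i) _)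
    set η₀ : Matrix m m ℂ := V * Matrix.diagonal (fun i => ((d i : ℝ) : ℂ)) * star V with hη₀def
    have hη₀h : η₀.IsHermitian := by rw [hη₀def]; exact SRenyiAux.isHermitian_conj_diag _
    refine ⟨η₀, ⟨?_, ?_⟩, ?_⟩
    · rw [hη₀def]; exact SRenyiAux.posSemidef_conj_diag hd0
    · -- trace normalization
      rw [SRenyiAux.mpow_eq_conj_diag hη₀h hV hη₀def, SRenyiAux.trace_conj_diag hV]
      have hval : ∀ i, d i ^ ((1:ℝ) / α) = T⁻¹ * lam i ^ ((1:ℝ) / (1 - α)) := by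
        intro i
        rw [hddef]
        rw [Real.mul_rpow (Real.rpow_nonneg hT0.le _) (Real.rpow_nonneg (hlam0 i) _),
          ← Real.rpow_mul hT0.le, ← Real.rpow_mul (hlam0 i),
          show (-α) * (1 / α) = (-1 : ℝ) by field_simp,
          show (α / (1 - α)) * (1 / α) = (1:ℝ) / (1 - α) by field_simp,
          Real.rpow_neg hT0.le, Real.rpow_one]
      have hsum : ∑ i, ((d i ^ ((1:ℝ) / α) : ℝ) : ℂ) = ((1 : ℝ) : ℂ) := by
        rw [← Complex.ofReal_sum]
        congr 1
        calc ∑ i, d i ^ ((1:ℝ) / α) = ∑ i, T⁻¹ * lam i ^ ((1:ℝ) / (1 - α)) :=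
              Finset.sum_congr rfl fun i _ => hval i
          _ = T⁻¹ * T := by rw [← Finset.mul_sum, hTdef]
          _ = 1 := inv_mul_cancel₀ hT0.ne'
      rw [hsum, Complex.ofReal_one]
    · -- the attained value
      show (η₀ * P * Qα * P).trace.re = T ^ (1 - α)
      have hassoc : η₀ * P * Qα * P = η₀ * M := by rw [hMdef]; simp only [Matrix.mul_assoc]
      rw [hassoc, hη₀def, hMform, SRenyiAux.conj_diag_mul hV, SRenyiAux.trace_conj_diag hV]
      have h1 : ∑ i, ((d i : ℝ) : ℂ) * ((lam i : ℝ) : ℂ) = ((∑ i, d i * lam i : ℝ) : ℂ) := by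
        push_cast
        ring
      rw [h1, Complex.ofReal_re]
      have h2 : ∀ i, d i * lam i = T ^ (-α) * lam i ^ ((1:ℝ) / (1 - α)) := by
        intro i
        rw [hddef, mul_assoc, ← Real.rpow_add_one (hlam i).ne',
          show α / (1 - α) + 1 = (1:ℝ) / (1 - α) by field_simp; ring]
      calc ∑ i, d i * lam i = ∑ i, T ^ (-α) * lam i ^ ((1:ℝ) / (1 - α)) :=
            Finset.sum_congr rfl fun i _ => h2 i
        _ = T ^ (-α) * T := by rw [← Finset.mul_sum, hTdef]
        _ = T ^ (1 - α) := by
            rw [show (1 - α) = -α + 1 by ring, Real.rpow_add hT0, Real.rpow_one]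
  · -- upper bound
    rintro x ⟨η, ⟨hηpsd, hηtr⟩, rfl⟩
    have hηh : η.IsHermitian := hηpsd.1
    set Uη : Matrix m m ℂ := (hηh.eigenvectorUnitary : Matrix m m ℂ) with hUηdef
    have hUηmem : Uη ∈ Matrix.unitaryGroup m ℂ := (hηh.eigenvectorUnitary).2
    set μ : m → ℝ := hηh.eigenvalues with hμdef
    have hμ0 : ∀ i, 0 ≤ μ i := fun i => hηpsd.eigenvalues_nonneg i
    have hμsum : ∑ i, μ i ^ ((1:ℝ) / α) = 1 := by
      rw [SRenyiAux.mpow_def hηh, SRenyiAux.trace_conj_diag hUηmem,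
        ← Complex.ofReal_sum] at hηtr
      exact_mod_cast hηtr
    show (η * P * Qα * P).trace.re ≤ T ^ (1 - α)
    have hassoc : η * P * Qα * P = η * M := by rw [hMdef]; simp only [Matrix.mul_assoc]
    have hηform : η = Uη * Matrix.diagonal (fun i => ((μ i : ℝ) : ℂ)) * star Uη :=
      SRenyiAux.spectral hηh
    set c : m → m → ℝ := fun i j => Complex.normSq ((star Uη * V) i j) with hcdef
    have htr : (η * M).trace.re = ∑ i, ∑ j, μ i * lam j * c i j := by
      conv_lhs => rw [hηform, hMform]
      exact SRenyiAux.trace_conj_mul_conj hUηmem hV μ lam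
    have hc0 : ∀ i j, 0 ≤ c i j := fun i j => Complex.normSq_nonneg _
    have hWη : star Uη * V ∈ Matrix.unitaryGroup m ℂ :=
      mul_mem (Unitary.star_mem hUηmem) hV
    have hrow : ∀ i, ∑ j, c i j = 1 := fun i => SRenyiAux.sum_normSq_row hWη i
    have hcol : ∀ j, ∑ i, c i j = 1 := fun j => SRenyiAux.sum_normSq_col hWη j
    rw [hassoc, htr]
    have hpq : ((1:ℝ)/α).HolderConjugate ((1:ℝ)/(1-α)) := by
      rw [Real.holderConjugate_iff]
      constructor
      · rw [lt_div_iff₀ hα0]; linarith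
      · rw [one_div, one_div, inv_inv, inv_inv]; ring
    set F : m × m → ℝ := fun p => c p.1 p.2 ^ α * μ p.1 with hFdef
    set G : m × m → ℝ := fun p => c p.1 p.2 ^ (1-α) * lam p.2 with hGdef
    have hF0 : ∀ p ∈ (Finset.univ : Finset (m × m)), 0 ≤ F p := fun p _ =>
      mul_nonneg (Real.rpow_nonneg (hc0 _ _) _) (hμ0 _)
    have hG0 : ∀ p ∈ (Finset.univ : Finset (m × m)), 0 ≤ G p := fun p _ =>
      mul_nonneg (Real.rpow_nonneg (hc0 _ _) _) (hlam0 _)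
    have hmain := Real.inner_le_Lp_mul_Lq_of_nonneg (s := Finset.univ) hpq hF0 hG0
    have hL : ∑ p : m × m, F p * G p = ∑ i, ∑ j, μ i * lam j * c i j := by
      rw [Fintype.sum_prod_type]
      refine Finset.sum_congr rfl fun i _ => Finset.sum_congr rfl fun j _ => ?_
      rw [hFdef, hGdef]
      have hcsplit : c i j ^ α * c i j ^ (1-α) = c i j := by
        rw [← Real.rpow_add' (hc0 i j) (by norm_num),
          show α + (1-α) = (1:ℝ) by ring, Real.rpow_one]
      calc c i j ^ α * μ i * (c i j ^ (1-α) * lam j)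
          = μ i * lam j * (c i j ^ α * c i j ^ (1-α)) := by ring
        _ = μ i * lam j * c i j := by rw [hcsplit]
    have hFsum : ∑ p : m × m, F p ^ ((1:ℝ)/α) = 1 := by
      rw [Fintype.sum_prod_type]
      calc ∑ i, ∑ j, F (i, j) ^ ((1:ℝ)/α)
          = ∑ i, ∑ j, c i j * μ i ^ ((1:ℝ)/α) := by
            refine Finset.sum_congr rfl fun i _ => Finset.sum_congr rfl fun j _ => ?_
            rw [hFdef]
            rw [Real.mul_rpow (Real.rpow_nonneg (hc0 i j) _) (hμ0 i),
              ← Real.rpow_mul (hc0 i j),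
              show α * ((1:ℝ)/α) = (1:ℝ) by field_simp, Real.rpow_one]
        _ = ∑ i, μ i ^ ((1:ℝ)/α) := by
            refine Finset.sum_congr rfl fun i _ => ?_
            rw [← Finset.sum_mul, hrow i, one_mul]
        _ = 1 := hμsum
    have hGsum : ∑ p : m × m, G p ^ ((1:ℝ)/(1-α)) = T := by
      rw [Fintype.sum_prod_type]
      calc ∑ i, ∑ j, G (i, j) ^ ((1:ℝ)/(1-α))
          = ∑ i, ∑ j, c i j * lam j ^ ((1:ℝ)/(1-α)) := by
            refine Finset.sum_congr rfl fun i _ => Finset.sum_congr rfl fun j _ => ?_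
            rw [hGdef]
            rw [Real.mul_rpow (Real.rpow_nonneg (hc0 i j) _) (hlam0 j),
              ← Real.rpow_mul (hc0 i j),
              show (1-α) * ((1:ℝ)/(1-α)) = (1:ℝ) by field_simp, Real.rpow_one]
        _ = ∑ j, ∑ i, c i j * lam j ^ ((1:ℝ)/(1-α)) := Finset.sum_comm
        _ = ∑ j, lam j ^ ((1:ℝ)/(1-α)) := by
            refine Finset.sum_congr rfl fun j _ => ?_
            rw [← Finset.sum_mul, hcol j, one_mul]
        _ = T := hTdef.symm
    rw [hL, hFsum, hGsum, one_div_one_div, one_div_one_div, Real.one_rpow, one_mul] at hmain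
    exact hmain
end

section
/- Constrained optimization over the probability simplex: let A range over a finite nonempty index set, let α ∈ (0,1), let (q_A) and (w_A) be probability distributions with all entries strictly positive, and let (s_A) be real numbers. Then the supremum over all probability distributions (p_A) (with p_A ≥ 0, Σ_A p_A = 1) of (1/α) · log [ Σ_A q_A (p_A/w_A)^α e^{α s_A} ] is attained and equals ((1−α)/α) · log [ Σ_A q_A^{1/(1−α)} w_A^{−α/(1−α)} e^{α s_A/(1−α)} ]. -/
open Matrix
open scoped Kronecker ComplexOrder

/-- constrained optimization over the probability simplex: the supremum of
`(1/α) log [Σ_A q_A (p_A/w_A)^α e^{α s_A}]` over probability distributions `(p_A)` is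
attained and equals `((1-α)/α) log [Σ_A q_A^{1/(1-α)} w_A^{-α/(1-α)} e^{α s_A/(1-α)}]`. -/
theorem simplex_sup_renyi {ι : Type*} [Fintype ι] [Nonempty ι]
    (α : ℝ) (hα : α ∈ Set.Ioo (0 : ℝ) 1)
    (q w : ι → ℝ) (hq : ∀ A, 0 < q A) (hq1 : ∑ A, q A = 1)
    (hw : ∀ A, 0 < w A) (hw1 : ∑ A, w A = 1) (s : ι → ℝ) :
    IsGreatest
      {t : ℝ | ∃ p : ι → ℝ, (∀ A, 0 ≤ p A) ∧ (∑ A, p A = 1) ∧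
        t = (1 / α) * Real.log (∑ A, q A * (p A / w A) ^ α * Real.exp (α * s A))}
      (((1 - α) / α) *
        Real.log (∑ A, q A ^ (1 / (1 - α)) * w A ^ (-α / (1 - α)) *
          Real.exp (α * s A / (1 - α)))) := by
  obtain ⟨hα0, hα1⟩ := hα
  have hβ : (0:ℝ) < 1 - α := by linarith
  set c : ι → ℝ := fun A => q A * w A ^ (-α) * Real.exp (α * s A) with hc_def
  have hc : ∀ A, 0 < c A := fun A =>
    mul_pos (mul_pos (hq A) (Real.rpow_pos_of_pos (hw A) _)) (Real.exp_pos _)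
  set Z : ℝ := ∑ A, c A ^ (1/(1-α)) with hZ_def
  have hZ : 0 < Z := Finset.sum_pos (fun A _ => Real.rpow_pos_of_pos (hc A) _) Finset.univ_nonempty
  have hsum_eq : (∑ A, q A ^ (1 / (1 - α)) * w A ^ (-α / (1 - α)) *
      Real.exp (α * s A / (1 - α))) = Z := by
    refine Finset.sum_congr rfl fun A _ => ?_
    rw [hc_def]
    simp only
    rw [Real.mul_rpow (mul_pos (hq A) (Real.rpow_pos_of_pos (hw A) _)).le (Real.exp_nonneg _),
        Real.mul_rpow (hq A).le (Real.rpow_pos_of_pos (hw A) _).le,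
        ← Real.rpow_mul (hw A).le, ← Real.exp_mul]
    rw [neg_mul, mul_one_div, mul_one_div, neg_div]
  have hkey : ∀ p : ι → ℝ, (∀ A, 0 ≤ p A) →
      (∑ A, q A * (p A / w A) ^ α * Real.exp (α * s A)) = ∑ A, c A * p A ^ α := by
    intro p hp
    refine Finset.sum_congr rfl fun A _ => ?_
    rw [Real.div_rpow (hp A) (hw A).le, hc_def]
    simp only
    rw [Real.rpow_neg (hw A).le]
    field_simp
  rw [hsum_eq]
  constructor
  · refine ⟨fun A => c A ^ (1/(1-α)) / Z,
      fun A => div_nonneg (Real.rpow_nonneg (hc A).le _) hZ.le, ?_, ?_⟩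
    · rw [← Finset.sum_div, ← hZ_def, div_self hZ.ne']
    · rw [hkey _ (fun A => div_nonneg (Real.rpow_nonneg (hc A).le _) hZ.le)]
      have key : (∑ A, c A * (c A ^ (1/(1-α)) / Z) ^ α) = Z ^ (1 - α) := by
        have e : ∀ A, c A * (c A ^ (1/(1-α)) / Z) ^ α = c A ^ (1/(1-α)) * (Z ^ α)⁻¹ := by
          intro A
          have e1 : (c A ^ ((1:ℝ)/(1-α))) ^ α = c A ^ (α/(1-α)) := by
            rw [← Real.rpow_mul (hc A).le]; congr 1; field_simp
          have e2 : c A ^ ((1:ℝ)/(1-α)) = c A * c A ^ (α/(1-α)) := by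
            rw [show (1:ℝ)/(1-α) = 1 + α/(1-α) by field_simp; ring, Real.rpow_add (hc A),
              Real.rpow_one]
          rw [Real.div_rpow (Real.rpow_nonneg (hc A).le _) hZ.le, e1, div_eq_mul_inv,
            ← mul_assoc, ← e2]
        rw [Finset.sum_congr rfl fun A _ => e A, ← Finset.sum_mul, ← hZ_def,
          ← Real.rpow_neg hZ.le]
        nth_rewrite 1 [← Real.rpow_one Z]
        rw [← Real.rpow_add hZ]
        ring_nf
      rw [key, Real.log_rpow hZ]
      ring
  · rintro t ⟨p, hp, hp1, rfl⟩
    rw [hkey p hp]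
    have hconj : Real.HolderConjugate (1/(1-α)) (1/α) := by
      rw [Real.holderConjugate_iff]
      constructor
      · rw [lt_div_iff₀ hβ]; linarith
      · field_simp; ring
    have hholder := Real.inner_le_Lp_mul_Lq_of_nonneg (s := Finset.univ) hconj
      (f := c) (g := fun A => p A ^ α) (fun i _ => (hc i).le)
      (fun i _ => Real.rpow_nonneg (hp i) _)
    simp only [one_div_one_div] at hholder
    have hg : (∑ A, (p A ^ α) ^ (1/α)) = 1 := by
      have e : ∀ A, (p A ^ α) ^ (1/α) = p A := fun A => by
        rw [← Real.rpow_mul (hp A), mul_one_div, div_self hα0.ne', Real.rpow_one]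
      rw [Finset.sum_congr rfl fun A _ => e A, hp1]
    rw [hg, Real.one_rpow, mul_one] at hholder
    have hSpos : 0 < ∑ A, c A * p A ^ α := by
      obtain ⟨A₀, hA₀⟩ : ∃ A, 0 < p A := by
        by_contra h
        push_neg at h
        have h0 : (∑ A, p A) = 0 := Finset.sum_eq_zero fun A _ => le_antisymm (h A) (hp A)
        rw [hp1] at h0; norm_num at h0
      refine Finset.sum_pos' (fun A _ => mul_nonneg (hc A).le (Real.rpow_nonneg (hp A) _))
        ⟨A₀, Finset.mem_univ _, mul_pos (hc A₀) (Real.rpow_pos_of_pos hA₀ _)⟩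
    have hlog := Real.log_le_log hSpos hholder
    rw [Real.log_rpow hZ] at hlog
    calc (1/α) * Real.log (∑ A, c A * p A ^ α)
        ≤ (1/α) * ((1-α) * Real.log Z) :=
          mul_le_mul_of_nonneg_left hlog (by positivity)
      _ = ((1-α)/α) * Real.log Z := by ring
end

section
/- The modular-theoretic sandwiched Rényi relative entropy equals the algebraic one in the finite-dimensional block setting: let A range over a finite index set, let α ∈ (0,1), let (q_A) and (w_A) be probability distributions with strictly positive entries, and for each A let σ_A, τ_A be positive definite density matrices on a finite-dimensional complex Hilbert space H_A. Then the supremum over all probability distributions (p_A) and families (ρ_A) of density matrices on H_A of (1/α) · log [ Σ_A q_A (p_A^α / w_A^α) Tr(ρ_A^α σ_A^{1/2} τ_A^{−α} σ_A^{1/2}) ] equals (n−1)⁻¹ · log [ Σ_A q_A^n w_A^{1−n} exp((n−1) S_n(σ_A ‖ τ_A)) ], where n = 1/(1−α). -/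
open Matrix
open scoped Kronecker ComplexOrder

namespace SR15

variable {m : Type*} [Fintype m] [DecidableEq m]

/-- `A = U diag(d) U*` with `U` unitary and `d` real. -/
structure Rep (A U : Matrix m m ℂ) (d : m → ℝ) : Prop where
  hUl : U * star U = 1
  hUr : star U * U = 1
  hA : A = U * Matrix.diagonal (fun i => ((d i : ℝ) : ℂ)) * star U

lemma Rep.isHermitian {A U : Matrix m m ℂ} {d : m → ℝ} (h : Rep A U d) : A.IsHermitian := by
  rw [h.hA]
  have hd : (Matrix.diagonal (fun i => ((d i : ℝ) : ℂ))).IsHermitian := by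
    rw [Matrix.IsHermitian, diagonal_conjTranspose]
    have hstar : (star fun i => ((d i : ℝ) : ℂ)) = fun i => ((d i : ℝ) : ℂ) := by
      funext i
      simp [Complex.conj_ofReal]
    rw [hstar]
  rw [Matrix.IsHermitian, Matrix.star_eq_conjTranspose, conjTranspose_mul, conjTranspose_mul,
    conjTranspose_conjTranspose, hd.eq, mul_assoc]

lemma rep_spectral {A : Matrix m m ℂ} (hA : A.IsHermitian) :
    Rep A (hA.eigenvectorUnitary : Matrix m m ℂ) hA.eigenvalues :=
  ⟨hA.eigenvectorUnitary.2.2, hA.eigenvectorUnitary.2.1, hA.spectral_theorem⟩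

lemma mpow_eq {A : Matrix m m ℂ} (hA : A.IsHermitian) (r : ℝ) :
    mpow A r = (hA.eigenvectorUnitary : Matrix m m ℂ) *
      Matrix.diagonal (fun i => ((hA.eigenvalues i ^ r : ℝ) : ℂ)) *
      star (hA.eigenvectorUnitary : Matrix m m ℂ) := dif_pos hA

/-- Well-definedness of the functional calculus. -/
lemma Rep.fc {A U : Matrix m m ℂ} {d : m → ℝ} (h : Rep A U d) (g : ℝ → ℝ)
    (hA : A.IsHermitian) :
    (hA.eigenvectorUnitary : Matrix m m ℂ) *
      Matrix.diagonal (fun i => ((g (hA.eigenvalues i) : ℝ) : ℂ)) *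
      star (hA.eigenvectorUnitary : Matrix m m ℂ)
    = U * Matrix.diagonal (fun i => ((g (d i) : ℝ) : ℂ)) * star U := by
  have hrep := rep_spectral hA
  set V := (hA.eigenvectorUnitary : Matrix m m ℂ) with hV
  set W := star V * U with hW
  have hWl : W * star W = 1 := by
    rw [hW, Matrix.star_mul, star_star, mul_assoc, ← mul_assoc U, h.hUl, one_mul, hrep.hUr]
  have hVW : V * W = U := by
    rw [hW, ← mul_assoc, hrep.hUl, one_mul]
  have hinter : Matrix.diagonal (fun i => ((hA.eigenvalues i : ℝ) : ℂ)) * W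
      = W * Matrix.diagonal (fun i => ((d i : ℝ) : ℂ)) := by
    have h1 : V * Matrix.diagonal (fun i => ((hA.eigenvalues i : ℝ) : ℂ)) * star V
        = U * Matrix.diagonal (fun i => ((d i : ℝ) : ℂ)) * star U := by
      rw [← hrep.hA, ← h.hA]
    calc Matrix.diagonal (fun i => ((hA.eigenvalues i : ℝ) : ℂ)) * W
        = star V * (V * Matrix.diagonal (fun i => ((hA.eigenvalues i : ℝ) : ℂ)) * star V) * U := by
          rw [hW]
          simp only [← Matrix.mul_assoc]
          rw [hrep.hUr, one_mul]
      _ = star V * (U * Matrix.diagonal (fun i => ((d i : ℝ) : ℂ)) * star U) * U := by rw [h1]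
      _ = W * Matrix.diagonal (fun i => ((d i : ℝ) : ℂ)) := by
          rw [hW]
          simp only [Matrix.mul_assoc]
          rw [h.hUr, mul_one]
  have hg : Matrix.diagonal (fun i => ((g (hA.eigenvalues i) : ℝ) : ℂ)) * W
      = W * Matrix.diagonal (fun i => ((g (d i) : ℝ) : ℂ)) := by
    ext i j
    rw [Matrix.diagonal_mul, Matrix.mul_diagonal]
    by_cases hw : W i j = 0
    · rw [hw, mul_zero, zero_mul]
    · have hentry : ((hA.eigenvalues i : ℝ) : ℂ) * W i j = W i j * ((d j : ℝ) : ℂ) := by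
        have := congrFun (congrFun hinter i) j
        rwa [Matrix.diagonal_mul, Matrix.mul_diagonal] at this
      have heq : hA.eigenvalues i = d j := by
        have hz : (((hA.eigenvalues i : ℝ) : ℂ) - ((d j : ℝ) : ℂ)) * W i j = 0 := by
          rw [sub_mul, hentry]; ring
        have : ((hA.eigenvalues i : ℝ) : ℂ) = ((d j : ℝ) : ℂ) := by
          rcases mul_eq_zero.mp hz with h' | h'
          · linear_combination h'
          · exact absurd h' hw
        exact_mod_cast this
      rw [heq, mul_comm]
  calc V * Matrix.diagonal (fun i => ((g (hA.eigenvalues i) : ℝ) : ℂ)) * star V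
      = V * (Matrix.diagonal (fun i => ((g (hA.eigenvalues i) : ℝ) : ℂ)) * (W * star W)) * star V := by
        rw [hWl, mul_one]
    _ = (V * W) * Matrix.diagonal (fun i => ((g (d i) : ℝ) : ℂ)) * star (V * W) := by
        rw [show star (V * W) = star W * star V from Matrix.star_mul V W,
          ← Matrix.mul_assoc (Matrix.diagonal (fun i => ((g (hA.eigenvalues i) : ℝ) : ℂ))) W (star W),
          hg]
        simp only [Matrix.mul_assoc]
    _ = U * Matrix.diagonal (fun i => ((g (d i) : ℝ) : ℂ)) * star U := by rw [hVW]

lemma Rep.mpow {A U : Matrix m m ℂ} {d : m → ℝ} (h : Rep A U d) (r : ℝ) :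
    Rep (mpow A r) U (fun i => d i ^ r) := by
  have hA := h.isHermitian
  exact ⟨h.hUl, h.hUr, by rw [mpow_eq hA r]; exact h.fc (fun x => x ^ r) hA⟩

lemma Rep.mul {A B U : Matrix m m ℂ} {d e : m → ℝ} (h1 : Rep A U d) (h2 : Rep B U e) :
    Rep (A * B) U (fun i => d i * e i) := by
  refine ⟨h1.hUl, h1.hUr, ?_⟩
  rw [h1.hA, h2.hA]
  have hde : Matrix.diagonal (fun i => ((d i : ℝ) : ℂ)) * Matrix.diagonal (fun i => ((e i : ℝ) : ℂ))
      = Matrix.diagonal (fun i => ((d i * e i : ℝ) : ℂ)) := by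
    rw [diagonal_mul_diagonal]
    congr 1
    funext i
    push_cast
    ring
  calc U * Matrix.diagonal (fun i => ((d i : ℝ) : ℂ)) * star U *
        (U * Matrix.diagonal (fun i => ((e i : ℝ) : ℂ)) * star U)
      = U * (Matrix.diagonal (fun i => ((d i : ℝ) : ℂ)) * ((star U * U) *
          (Matrix.diagonal (fun i => ((e i : ℝ) : ℂ)) * star U))) := by
        simp only [Matrix.mul_assoc]
    _ = U * Matrix.diagonal (fun i => ((d i * e i : ℝ) : ℂ)) * star U := by
        rw [h1.hUr, one_mul, ← hde]
        simp only [Matrix.mul_assoc]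

lemma Rep.trace {A U : Matrix m m ℂ} {d : m → ℝ} (h : Rep A U d) :
    A.trace = ((∑ i, d i : ℝ) : ℂ) := by
  rw [h.hA, Matrix.trace_mul_cycle, h.hUr, one_mul, trace_diagonal]
  push_cast
  rfl

lemma Rep.trace_re {A U : Matrix m m ℂ} {d : m → ℝ} (h : Rep A U d) :
    A.trace.re = ∑ i, d i := by rw [h.trace, Complex.ofReal_re]

lemma Rep.posSemidef {A U : Matrix m m ℂ} {d : m → ℝ} (h : Rep A U d)
    (hd : ∀ i, 0 ≤ d i) : A.PosSemidef := by
  have hdiag : (Matrix.diagonal (fun i => ((d i : ℝ) : ℂ))).PosSemidef :=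
    Matrix.posSemidef_diagonal_iff.mpr fun i => Complex.zero_le_real.mpr (hd i)
  have := hdiag.mul_mul_conjTranspose_same U
  rwa [← Matrix.star_eq_conjTranspose, ← h.hA] at this

lemma Rep.det {A U : Matrix m m ℂ} {d : m → ℝ} (h : Rep A U d) :
    A.det = ∏ i, ((d i : ℝ) : ℂ) := by
  rw [h.hA, det_mul, det_mul, det_diagonal, mul_right_comm, ← det_mul, h.hUl, det_one, one_mul]


lemma trace_conj {U M : Matrix m m ℂ} (hUr : star U * U = 1) :
    (U * M * star U).trace = M.trace := by
  rw [Matrix.trace_mul_cycle, hUr, one_mul]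

lemma trace_pair {A B U V : Matrix m m ℂ} {d e : m → ℝ} (h1 : Rep A U d) (h2 : Rep B V e) :
    (A * B).trace = ((∑ i, ∑ j, d i * e j * Complex.normSq ((star U * V) i j) : ℝ) : ℂ) := by
  classical
  set W := star U * V with hW
  have hsW : star W = star V * U := by rw [hW, Matrix.star_mul, star_star]
  have hmat : A * B = U * (Matrix.diagonal (fun i => ((d i : ℝ) : ℂ)) *
      (W * Matrix.diagonal (fun j => ((e j : ℝ) : ℂ)) * star W)) * star U := by
    rw [h1.hA, h2.hA, hW, hsW]
    simp only [Matrix.mul_assoc]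
    rw [h1.hUl, mul_one]
  rw [hmat, trace_conj h1.hUr]
  have hdiag : ∀ i, (Matrix.diagonal (fun i => ((d i : ℝ) : ℂ)) *
      (W * Matrix.diagonal (fun j => ((e j : ℝ) : ℂ)) * star W)).diag i
      = ((∑ j, d i * e j * Complex.normSq (W i j) : ℝ) : ℂ) := by
    intro i
    rw [Matrix.diag_apply, Matrix.diagonal_mul, Matrix.mul_apply]
    push_cast
    rw [Finset.mul_sum]
    congr 1
    funext j
    rw [Matrix.mul_diagonal, Matrix.star_eq_conjTranspose, Matrix.conjTranspose_apply]
    have : W i j * ((e j : ℝ) : ℂ) * star (W i j)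
        = ((e j : ℝ) : ℂ) * (W i j * star (W i j)) := by ring
    rw [this, RCLike.star_def, Complex.mul_conj]
    push_cast
    ring
  rw [Matrix.trace]
  push_cast
  exact Finset.sum_congr rfl fun i _ => by rw [hdiag i]; push_cast; ring

lemma trace_pair_re {A B U V : Matrix m m ℂ} {d e : m → ℝ} (h1 : Rep A U d) (h2 : Rep B V e) :
    (A * B).trace.re = ∑ i, ∑ j, d i * e j * Complex.normSq ((star U * V) i j) := by
  rw [trace_pair h1 h2, Complex.ofReal_re]

lemma row_sum {U V : Matrix m m ℂ} (hUr : star U * U = 1) (hVl : V * star V = 1) (i : m) :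
    ∑ j, Complex.normSq ((star U * V) i j) = 1 := by
  set W := star U * V with hW
  have hsW : star W = star V * U := by rw [hW, Matrix.star_mul, star_star]
  have hWl : W * star W = 1 := by
    rw [hW, hsW]
    calc star U * V * (star V * U) = star U * ((V * star V) * U) := by simp only [Matrix.mul_assoc]
      _ = 1 := by rw [hVl, one_mul, hUr]
  have h1 : (W * star W) i i = 1 := by rw [hWl, Matrix.one_apply_eq]
  rw [Matrix.mul_apply] at h1
  have h2 : (((∑ j, Complex.normSq (W i j)) : ℝ) : ℂ) = 1 := by
    rw [← h1]
    push_cast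
    exact Finset.sum_congr rfl fun j _ => by
      rw [Matrix.star_eq_conjTranspose, Matrix.conjTranspose_apply, RCLike.star_def,
        Complex.mul_conj]
  exact_mod_cast h2

lemma col_sum {U V : Matrix m m ℂ} (hUl : U * star U = 1) (hVr : star V * V = 1) (j : m) :
    ∑ i, Complex.normSq ((star U * V) i j) = 1 := by
  set W := star U * V with hW
  have hsW : star W = star V * U := by rw [hW, Matrix.star_mul, star_star]
  have hWr : star W * W = 1 := by
    rw [hW, hsW]
    calc star V * U * (star U * V) = star V * ((U * star U) * V) := by simp only [Matrix.mul_assoc]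
      _ = 1 := by rw [hUl, one_mul, hVr]
  have h1 : (star W * W) j j = 1 := by rw [hWr, Matrix.one_apply_eq]
  rw [Matrix.mul_apply] at h1
  have h2 : (((∑ i, Complex.normSq (W i j)) : ℝ) : ℂ) = 1 := by
    rw [← h1]
    push_cast
    exact Finset.sum_congr rfl fun i _ => by
      rw [Matrix.star_eq_conjTranspose, Matrix.conjTranspose_apply, RCLike.star_def,
        mul_comm, Complex.mul_conj]
  exact_mod_cast h2

open Polynomial in
lemma charpoly_conj {P A Q : Matrix m m ℂ} (h1 : P * Q = 1) :
    (P * A * Q).charpoly = A.charpoly := by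
  classical
  set f : Matrix m m ℂ →+* Matrix m m ℂ[X] := (Polynomial.C : ℂ →+* Polynomial ℂ).mapMatrix with hf
  have key : charmatrix (P * A * Q) = f P * charmatrix A * f Q := by
    show Matrix.scalar m (X : ℂ[X]) - f (P * A * Q)
      = f P * (Matrix.scalar m (X : ℂ[X]) - f A) * f Q
    rw [_root_.map_mul, _root_.map_mul, mul_sub, sub_mul]
    congr 1
    have hcomm : Matrix.scalar m (X : ℂ[X]) * f P = f P * Matrix.scalar m (X : ℂ[X]) :=
      (Matrix.scalar_commute (X : ℂ[X]) (fun r' => mul_comm _ _) (f P)).eq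
    rw [← hcomm, mul_assoc, ← _root_.map_mul, h1, _root_.map_one, mul_one]
  have hfPQ : (f P).det * (f Q).det = 1 := by
    rw [← det_mul, ← _root_.map_mul, h1, _root_.map_one, det_one]
  show (charmatrix (P * A * Q)).det = (charmatrix A).det
  rw [key, det_mul, det_mul, mul_right_comm, hfPQ, one_mul]

open Polynomial in
lemma charpoly_diagonal (v : m → ℂ) :
    (Matrix.diagonal v).charpoly = ∏ i, ((X : ℂ[X]) - C (v i)) := by
  classical
  have hc : charmatrix (Matrix.diagonal v) = Matrix.diagonal (fun i => (X : ℂ[X]) - C (v i)) := by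
    ext i j
    by_cases hij : i = j
    · subst hij
      rw [charmatrix_apply_eq, Matrix.diagonal_apply_eq, Matrix.diagonal_apply_eq]
    · rw [charmatrix_apply_ne _ _ _ hij, Matrix.diagonal_apply_ne _ hij,
        Matrix.diagonal_apply_ne _ hij, map_zero, neg_zero]
  show (charmatrix (Matrix.diagonal v)).det = _
  rw [hc, det_diagonal]

open Polynomial in
lemma Rep.charpoly {A U : Matrix m m ℂ} {d : m → ℝ} (h : Rep A U d) :
    A.charpoly = ∏ i, ((X : ℂ[X]) - C ((d i : ℝ) : ℂ)) := by
  rw [h.hA, charpoly_conj h.hUl, charpoly_diagonal]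

open Polynomial in
lemma sum_comp_eigenvalues {A B UA UB : Matrix m m ℂ} {d e : m → ℝ}
    (hA : Rep A UA d) (hB : Rep B UB e) (hchar : A.charpoly = B.charpoly) (f : ℝ → ℝ) :
    ∑ i, f (d i) = ∑ i, f (e i) := by
  classical
  have hpoly : ∏ i, ((X : ℂ[X]) - C ((d i : ℝ) : ℂ)) = ∏ i, ((X : ℂ[X]) - C ((e i : ℝ) : ℂ)) := by
    rw [← hA.charpoly, ← hB.charpoly, hchar]
  have hroots : ∀ g : m → ℝ, (∏ i, ((X : ℂ[X]) - C ((g i : ℝ) : ℂ))).roots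
      = Finset.univ.val.map (fun i => ((g i : ℝ) : ℂ)) := by
    intro g
    rw [Finset.prod_eq_multiset_prod]
    have hmm : (Multiset.map (fun i => (X : ℂ[X]) - C ((g i : ℝ) : ℂ)) Finset.univ.val)
        = Multiset.map (fun a => (X : ℂ[X]) - C a)
            (Finset.univ.val.map (fun i => ((g i : ℝ) : ℂ))) := by
      rw [Multiset.map_map]
      rfl
    rw [hmm, roots_multiset_prod_X_sub_C]
  have hmul : Finset.univ.val.map (fun i => ((d i : ℝ) : ℂ))
      = Finset.univ.val.map (fun i => ((e i : ℝ) : ℂ)) := by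
    rw [← hroots d, ← hroots e, hpoly]
  have hmulr : Finset.univ.val.map d = Finset.univ.val.map e := by
    have h2 := congrArg (Multiset.map Complex.re) hmul
    rw [Multiset.map_map, Multiset.map_map] at h2
    simpa only [Function.comp_def, Complex.ofReal_re] using h2
  rw [Finset.sum_eq_multiset_sum, Finset.sum_eq_multiset_sum]
  have hd : Multiset.map (fun i => f (d i)) Finset.univ.val
      = Multiset.map f (Finset.univ.val.map d) := by rw [Multiset.map_map]; rfl
  have he : Multiset.map (fun i => f (e i)) Finset.univ.val
      = Multiset.map f (Finset.univ.val.map e) := by rw [Multiset.map_map]; rfl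
  rw [hd, he, hmulr]

end SR15

namespace SR15

lemma rep_congr {m : Type*} [Fintype m] [DecidableEq m]
    {A A' U : Matrix m m ℂ} {d d' : m → ℝ} (h : Rep A U d) (h' : Rep A' U d')
    (hdd : ∀ i, d i = d' i) : A = A' := by
  rw [h.hA, h'.hA]
  have hfun : (fun i => ((d i : ℝ) : ℂ)) = fun i => ((d' i : ℝ) : ℂ) :=
    funext fun i => by rw [hdd i]
  rw [hfun]

lemma holder_sum {I : Type*} (s : Finset I) (x y : I → ℝ) {α : ℝ} (hα0 : 0 < α) (hα1 : α < 1)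
    (hx : ∀ i ∈ s, 0 ≤ x i) (hy : ∀ i ∈ s, 0 ≤ y i)
    (hxs : ∑ i ∈ s, x i = 1) {R : ℝ} (hR : 0 < R) (hys : ∑ i ∈ s, y i = R) :
    ∑ i ∈ s, x i ^ α * y i ^ (1 - α) ≤ R ^ (1 - α) := by
  have key : ∀ i ∈ s, x i ^ α * y i ^ (1 - α)
      ≤ (α * x i + (1 - α) * (y i / R)) * R ^ (1 - α) := by
    intro i hi
    have h1 : y i ^ (1 - α) = (y i / R) ^ (1 - α) * R ^ (1 - α) := by
      rw [Real.div_rpow (hy i hi) hR.le, div_mul_cancel₀]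
      exact (Real.rpow_pos_of_pos hR _).ne'
    rw [h1, ← mul_assoc]
    refine mul_le_mul_of_nonneg_right ?_ (Real.rpow_nonneg hR.le _)
    exact Real.geom_mean_le_arith_mean2_weighted hα0.le (by linarith) (hx i hi)
      (div_nonneg (hy i hi) hR.le) (by ring)
  calc ∑ i ∈ s, x i ^ α * y i ^ (1 - α)
      ≤ ∑ i ∈ s, (α * x i + (1 - α) * (y i / R)) * R ^ (1 - α) := Finset.sum_le_sum key
    _ = (α * (∑ i ∈ s, x i) + (1 - α) * ((∑ i ∈ s, y i) / R)) * R ^ (1 - α) := by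
        rw [← Finset.sum_mul]
        congr 1
        rw [Finset.sum_add_distrib, ← Finset.mul_sum, ← Finset.mul_sum, ← Finset.sum_div]
    _ = R ^ (1 - α) := by
        rw [hxs, hys, div_self hR.ne', mul_one, mul_one]
        have : α + (1 - α) = 1 := by ring
        rw [this, one_mul]

lemma block_key {m : Type*} [Fintype m] [DecidableEq m] [Nonempty m]
    {σ τ : Matrix m m ℂ} (hσpd : σ.PosDef) (hτpd : τ.PosDef)
    {α n : ℝ} (hα0 : 0 < α) (hα1 : α < 1) (hn : n = 1 / (1 - α)) :
    ∃ T : ℝ, 0 < T ∧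
      Real.exp ((n - 1) * SRenyi n σ τ) = T ∧
      (∀ ρ : Matrix m m ℂ, IsDensity ρ →
        0 < (mpow ρ α * mpow σ (1/2) * mpow τ (-α) * mpow σ (1/2)).trace.re ∧
        (mpow ρ α * mpow σ (1/2) * mpow τ (-α) * mpow σ (1/2)).trace.re ≤ T ^ (1 - α)) ∧
      (∃ ρ : Matrix m m ℂ, IsDensity ρ ∧
        (mpow ρ α * mpow σ (1/2) * mpow τ (-α) * mpow σ (1/2)).trace.re = T ^ (1 - α)) := by
  classical
  have h1α : (0:ℝ) < 1 - α := by linarith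
  have hnpos : 0 < n := by rw [hn]; positivity
  have hn1 : 1 < n := by rw [hn, lt_div_iff₀ h1α]; linarith
  have hn1' : n - 1 ≠ 0 := by linarith
  have hna : n * α = n - 1 := by rw [hn]; field_simp; ring
  have hn1a : n * (1 - α) = 1 := by rw [hn]; field_simp
  have hσh := hσpd.1
  have hτh := hτpd.1
  have hσeig : ∀ i, 0 < hσh.eigenvalues i := fun i => hσpd.eigenvalues_pos i
  have hτeig : ∀ i, 0 < hτh.eigenvalues i := fun i => hτpd.eigenvalues_pos i
  have repσ := rep_spectral hσh
  have repτ := rep_spectral hτh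
  set B := mpow σ (1/2 : ℝ) with hBdef
  set D := mpow τ (-(α/2) : ℝ) with hDdef
  have repB := repσ.mpow (1/2 : ℝ)
  have repD := repτ.mpow (-(α/2) : ℝ)
  have hDD : D * D = mpow τ (-α) := by
    refine rep_congr (repD.mul repD) (repτ.mpow (-α)) fun i => ?_
    rw [← Real.rpow_add (hτeig i), show -(α/2) + -(α/2) = -α by ring]
  have hBB : B * B = σ := by
    refine rep_congr (repB.mul repB) repσ fun i => ?_
    rw [← Real.rpow_add (hσeig i), show (1:ℝ)/2 + 1/2 = 1 by ring, Real.rpow_one]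
  set M := B * D with hMdef
  have hBherm : star B = B := by
    rw [Matrix.star_eq_conjTranspose]; exact repB.isHermitian
  have hDherm : star D = D := by
    rw [Matrix.star_eq_conjTranspose]; exact repD.isHermitian
  have hsM : star M = D * B := by rw [hMdef, Matrix.star_mul, hBherm, hDherm]
  set X := B * mpow τ (-α) * B with hXdef
  have hX : X = M * star M := by
    rw [hXdef, hsM, hMdef, ← hDD]
    simp only [Matrix.mul_assoc]
  have hXpsd : X.PosSemidef := by
    rw [hX, Matrix.star_eq_conjTranspose]
    exact posSemidef_self_mul_conjTranspose M
  have hXh : X.IsHermitian := hXpsd.1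
  have repX := rep_spectral hXh
  set μ := hXh.eigenvalues with hμdef
  have hdetB : B.det ≠ 0 := by
    rw [repB.det]
    exact Finset.prod_ne_zero_iff.mpr fun i _ =>
      Complex.ofReal_ne_zero.mpr (Real.rpow_pos_of_pos (hσeig i) _).ne'
  have hdetD : D.det ≠ 0 := by
    rw [repD.det]
    exact Finset.prod_ne_zero_iff.mpr fun i _ =>
      Complex.ofReal_ne_zero.mpr (Real.rpow_pos_of_pos (hτeig i) _).ne'
  have hdetM : M.det ≠ 0 := by
    rw [hMdef, Matrix.det_mul]
    exact mul_ne_zero hdetB hdetD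
  have hdetX : X.det ≠ 0 := by
    rw [hX, Matrix.det_mul]
    refine mul_ne_zero hdetM ?_
    rw [Matrix.star_eq_conjTranspose, Matrix.det_conjTranspose]
    exact star_ne_zero.mpr hdetM
  have hμnonneg : ∀ i, 0 ≤ μ i := fun i => hXpsd.eigenvalues_nonneg i
  have hμpos : ∀ i, 0 < μ i := by
    intro i
    rcases (hμnonneg i).lt_or_eq with h | h
    · exact h
    · exfalso
      apply hdetX
      rw [repX.det]
      refine Finset.prod_eq_zero (Finset.mem_univ i) ?_
      rw [← h]
      exact Complex.ofReal_zero
  refine ⟨∑ j, μ j ^ n, ?_, ?_, ?_, ?_⟩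
  case _ =>
    exact Finset.sum_pos (fun j _ => Real.rpow_pos_of_pos (hμpos j) n) Finset.univ_nonempty
  case _ =>
    -- exp ((n-1) SRenyi) = T
    have hT0 : 0 < ∑ j, μ j ^ n :=
      Finset.sum_pos (fun j _ => Real.rpow_pos_of_pos (hμpos j) n) Finset.univ_nonempty
    have hc : (1 - n) / (2 * n) = -(α/2) := by
      rw [hn]
      field_simp
      ring
    set Y := mpow τ (-(α/2)) * σ * mpow τ (-(α/2)) with hYdef
    have hY : Y = star M * M := by
      rw [hYdef, hsM, hMdef, ← hBB]
      simp only [Matrix.mul_assoc]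
      rfl
    have hYpsd : Y.PosSemidef := by
      rw [hY, Matrix.star_eq_conjTranspose]
      exact posSemidef_conjTranspose_mul_self M
    have hYh : Y.IsHermitian := hYpsd.1
    have repY := rep_spectral hYh
    have hMunit : IsUnit M.det := hdetM.isUnit
    have hMinv : M⁻¹ * M = 1 := Matrix.nonsing_inv_mul M hMunit
    have hconj : M⁻¹ * X * M = Y := by
      rw [hX, hY]
      calc M⁻¹ * (M * star M) * M = M⁻¹ * M * star M * M := by simp only [Matrix.mul_assoc]
        _ = star M * M := by rw [hMinv, one_mul]
    have hchar : Y.charpoly = X.charpoly := by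
      rw [← hconj]
      exact charpoly_conj hMinv
    have hsum : ∑ j, hYh.eigenvalues j ^ n = ∑ j, μ j ^ n :=
      sum_comp_eigenvalues repY repX hchar (fun x => x ^ n)
    have hSR : SRenyi n σ τ = (n - 1)⁻¹ * Real.log (∑ j, μ j ^ n) := by
      rw [SRenyi, hc, ← hYdef, (repY.mpow n).trace_re, hsum]
    rw [hSR, ← mul_assoc, mul_inv_cancel₀ hn1', one_mul, Real.exp_log hT0]
  case _ =>
    -- bounds for arbitrary density ρ
    intro ρ hρ
    have hT0 : 0 < ∑ j, μ j ^ n :=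
      Finset.sum_pos (fun j _ => Real.rpow_pos_of_pos (hμpos j) n) Finset.univ_nonempty
    have hρh : ρ.IsHermitian := hρ.1.1
    have repρ := rep_spectral hρh
    set lam := hρh.eigenvalues with hlamdef
    have hlam0 : ∀ i, 0 ≤ lam i := fun i => hρ.1.eigenvalues_nonneg i
    have hlam1 : ∑ i, lam i = 1 := by
      have h1 := repρ.trace
      rw [hρ.2] at h1
      exact_mod_cast h1.symm
    have hprod : mpow ρ α * mpow σ (1/2) * mpow τ (-α) * mpow σ (1/2) = mpow ρ α * X := by
      rw [hXdef, ← hBdef]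
      simp only [Matrix.mul_assoc]
    set c : m → m → ℝ := fun i j =>
      Complex.normSq ((star (hρh.eigenvectorUnitary : Matrix m m ℂ) *
        (hXh.eigenvectorUnitary : Matrix m m ℂ)) i j) with hcdef
    have hc0 : ∀ i j, 0 ≤ c i j := fun i j => Complex.normSq_nonneg _
    have hrow : ∀ i, ∑ j, c i j = 1 := fun i => row_sum repρ.hUr repX.hUl i
    have hcol : ∀ j, ∑ i, c i j = 1 := fun j => col_sum repρ.hUl repX.hUr j
    have hE : (mpow ρ α * mpow σ (1/2) * mpow τ (-α) * mpow σ (1/2)).trace.re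
        = ∑ i, ∑ j, lam i ^ α * μ j * c i j := by
      rw [hprod, trace_pair_re (repρ.mpow α) repX]
    constructor
    · -- positivity
      rw [hE]
      obtain ⟨i0, -, hi0⟩ : ∃ i ∈ Finset.univ, 0 < lam i := by
        by_contra hcon
        push_neg at hcon
        have : ∑ i, lam i = 0 := Finset.sum_eq_zero fun i hi =>
          le_antisymm (hcon i hi) (hlam0 i)
        rw [hlam1] at this
        exact one_ne_zero this
      obtain ⟨j0, -, hj0⟩ : ∃ j ∈ Finset.univ, 0 < c i0 j := by
        by_contra hcon
        push_neg at hcon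
        have : ∑ j, c i0 j = 0 := Finset.sum_eq_zero fun j hj =>
          le_antisymm (hcon j hj) (hc0 i0 j)
        rw [hrow i0] at this
        exact one_ne_zero this
      refine Finset.sum_pos' (fun i _ => Finset.sum_nonneg fun j _ => ?_) ⟨i0, Finset.mem_univ i0, ?_⟩
      · exact mul_nonneg (mul_nonneg (Real.rpow_nonneg (hlam0 i) _) (hμpos j).le) (hc0 i j)
      · refine Finset.sum_pos' (fun j _ => ?_) ⟨j0, Finset.mem_univ j0, ?_⟩
        · exact mul_nonneg (mul_nonneg (Real.rpow_nonneg (hlam0 i0) _) (hμpos j).le) (hc0 i0 j)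
        · exact mul_pos (mul_pos (Real.rpow_pos_of_pos hi0 α) (hμpos j0)) hj0
    · -- Hölder upper bound
      rw [hE]
      have hterm : ∀ i j, lam i ^ α * μ j * c i j
          = (c i j * lam i) ^ α * (c i j * μ j ^ n) ^ (1 - α) := by
        intro i j
        rw [Real.mul_rpow (hc0 i j) (hlam0 i), Real.mul_rpow (hc0 i j)
          (Real.rpow_nonneg (hμpos j).le n)]
        rw [← Real.rpow_mul (hμpos j).le, hn1a, Real.rpow_one]
        have hcc : c i j ^ α * c i j ^ (1 - α) = c i j := by
          rw [← Real.rpow_add' (hc0 i j) (by norm_num : α + (1 - α) ≠ 0)]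
          norm_num
        calc lam i ^ α * μ j * c i j = (c i j ^ α * c i j ^ (1-α)) * lam i ^ α * μ j := by
              rw [hcc]; ring
          _ = c i j ^ α * lam i ^ α * (c i j ^ (1-α) * μ j) := by ring
      calc ∑ i, ∑ j, lam i ^ α * μ j * c i j
          = ∑ p : m × m, (c p.1 p.2 * lam p.1) ^ α * (c p.1 p.2 * μ p.2 ^ n) ^ (1 - α) := by
            rw [Fintype.sum_prod_type]
            exact Finset.sum_congr rfl fun i _ => Finset.sum_congr rfl fun j _ => hterm i j
        _ ≤ (∑ j, μ j ^ n) ^ (1 - α) := by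
            refine holder_sum Finset.univ _ _ hα0 hα1
              (fun p _ => mul_nonneg (hc0 _ _) (hlam0 _))
              (fun p _ => mul_nonneg (hc0 _ _) (Real.rpow_nonneg (hμpos _).le _)) ?_ hT0 ?_
            · rw [Fintype.sum_prod_type]
              calc ∑ i, ∑ j, c i j * lam i = ∑ i, (∑ j, c i j) * lam i := by
                    exact Finset.sum_congr rfl fun i _ => by rw [Finset.sum_mul]
                _ = 1 := by
                    simp only [hrow, one_mul]
                    exact hlam1
            · rw [Fintype.sum_prod_type]
              rw [Finset.sum_comm]
              calc ∑ j, ∑ i, c i j * μ j ^ n = ∑ j, (∑ i, c i j) * μ j ^ n := by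
                    exact Finset.sum_congr rfl fun j _ => by rw [Finset.sum_mul]
                _ = ∑ j, μ j ^ n := by simp only [hcol, one_mul]
  case _ =>
    -- achiever
    have hT0 : 0 < ∑ j, μ j ^ n :=
      Finset.sum_pos (fun j _ => Real.rpow_pos_of_pos (hμpos j) n) Finset.univ_nonempty
    set T := ∑ j, μ j ^ n with hTdef
    set ρ : Matrix m m ℂ := (hXh.eigenvectorUnitary : Matrix m m ℂ) *
      Matrix.diagonal (fun j => ((μ j ^ n / T : ℝ) : ℂ)) *
      star (hXh.eigenvectorUnitary : Matrix m m ℂ) with hρdef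
    have repρ : Rep ρ (hXh.eigenvectorUnitary : Matrix m m ℂ) (fun j => μ j ^ n / T) :=
      ⟨repX.hUl, repX.hUr, hρdef⟩
    have hρd : IsDensity ρ := by
      constructor
      · exact repρ.posSemidef fun j => div_nonneg (Real.rpow_nonneg (hμpos j).le n) hT0.le
      · rw [repρ.trace, ← Finset.sum_div, ← hTdef, div_self hT0.ne']
        exact Complex.ofReal_one
    refine ⟨ρ, hρd, ?_⟩
    have hprod : mpow ρ α * mpow σ (1/2) * mpow τ (-α) * mpow σ (1/2) = mpow ρ α * X := by
      rw [hXdef, ← hBdef]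
      simp only [Matrix.mul_assoc]
    rw [hprod, ((repρ.mpow α).mul repX).trace_re]
    have hterm : ∀ j, (μ j ^ n / T) ^ α * μ j = μ j ^ n / T ^ α := by
      intro j
      rw [Real.div_rpow (Real.rpow_nonneg (hμpos j).le n) hT0.le,
        ← Real.rpow_mul (hμpos j).le, div_mul_eq_mul_div,
        ← Real.rpow_add_one (hμpos j).ne']
      congr 2
      linarith [hna]
    calc ∑ j, (μ j ^ n / T) ^ α * μ j = ∑ j, μ j ^ n / T ^ α :=
          Finset.sum_congr rfl fun j _ => hterm j
      _ = T / T ^ α := by rw [← Finset.sum_div, ← hTdef]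
      _ = T ^ (1 - α) := by rw [Real.rpow_sub hT0, Real.rpow_one]

end SR15

namespace SR15

lemma scalar_ub {q w Tv α n : ℝ} (hq : 0 < q) (hw : 0 < w) (hT : 0 < Tv)
    (hn1a : n * (1 - α) = 1) (h1na : (1 - n) * (1 - α) = -α) :
    (q ^ n * w ^ (1 - n) * Tv) ^ (1 - α) = q * (Tv ^ (1 - α) / w ^ α) := by
  rw [Real.mul_rpow (by positivity) hT.le, Real.mul_rpow (by positivity) (by positivity),
    ← Real.rpow_mul hq.le, ← Real.rpow_mul hw.le, hn1a, h1na, Real.rpow_one,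
    Real.rpow_neg hw.le]
  ring

lemma scalar_opt {q w Tv R α n : ℝ} (hq : 0 < q) (hw : 0 < w) (hT : 0 < Tv) (hR : 0 < R)
    (hna : n * α = n - 1) :
    q * ((q ^ n * w ^ (1 - n) * Tv / R) ^ α / w ^ α) * Tv ^ (1 - α)
      = q ^ n * w ^ (1 - n) * Tv / R ^ α := by
  rw [Real.div_rpow (by positivity) hR.le,
    Real.mul_rpow (by positivity) hT.le, Real.mul_rpow (by positivity) (by positivity),
    ← Real.rpow_mul hq.le, ← Real.rpow_mul hw.le]
  have hq' : q * q ^ (n * α) = q ^ n := by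
    have h2 := (Real.rpow_add hq 1 (n * α)).symm
    rw [Real.rpow_one] at h2
    rw [h2, show (1:ℝ) + n * α = n by linarith]
  have hw' : w ^ ((1 - n) * α) / w ^ α = w ^ (1 - n) := by
    rw [← Real.rpow_sub hw, show (1 - n) * α - α = 1 - n by linear_combination -hna]
  have hT' : Tv ^ α * Tv ^ (1 - α) = Tv := by
    rw [← Real.rpow_add hT, show α + (1 - α) = 1 by ring, Real.rpow_one]
  calc q * (q ^ (n * α) * w ^ ((1 - n) * α) * Tv ^ α / R ^ α / w ^ α) * Tv ^ (1 - α)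
      = (q * q ^ (n * α)) * (w ^ ((1 - n) * α) / w ^ α) * (Tv ^ α * Tv ^ (1 - α)) / R ^ α := by
        ring
    _ = q ^ n * w ^ (1 - n) * Tv / R ^ α := by rw [hq', hw', hT']

end SR15

/-- the modular-theoretic (Lashkari) sandwiched Rényi relative entropy equals
the algebraic sandwiched Rényi relative entropy in the finite-dimensional block setting:
the supremum over probability distributions `(p_A)` and density matrices `(ρ_A)` of
`(1/α) log [Σ_A q_A (p_A^α/w_A^α) Tr(ρ_A^α σ_A^{1/2} τ_A^{-α} σ_A^{1/2})]` equals
`(n-1)⁻¹ log [Σ_A q_A^n w_A^{1-n} exp((n-1) S_n(σ_A‖τ_A))]` with `n = 1/(1-α)`. -/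
theorem modular_srenyi_eq_algebraic {ι : Type*} [Fintype ι] (dA : ι → ℕ)
    (α : ℝ) (hα : α ∈ Set.Ioo (0 : ℝ) 1)
    (q w : ι → ℝ) (hq : ∀ A, 0 < q A) (hq1 : ∑ A, q A = 1)
    (hw : ∀ A, 0 < w A) (hw1 : ∑ A, w A = 1)
    (σ τ : ∀ A, Matrix (Fin (dA A)) (Fin (dA A)) ℂ)
    (hσ : ∀ A, IsDensity (σ A)) (hτ : ∀ A, IsDensity (τ A))
    (hσpd : ∀ A, (σ A).PosDef) (hτpd : ∀ A, (τ A).PosDef)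
    (n : ℝ) (hn : n = 1 / (1 - α)) :
    sSup {t : ℝ | ∃ (p : ι → ℝ) (ρ : ∀ A, Matrix (Fin (dA A)) (Fin (dA A)) ℂ),
        (∀ A, 0 ≤ p A) ∧ (∑ A, p A = 1) ∧ (∀ A, IsDensity (ρ A)) ∧
        t = (1 / α) * Real.log (∑ A, q A * (p A ^ α / w A ^ α) *
          ((mpow (ρ A) α * mpow (σ A) (1 / 2) * mpow (τ A) (-α) *
            mpow (σ A) (1 / 2)).trace.re))} =
      (n - 1)⁻¹ *
        Real.log (∑ A, q A ^ n * w A ^ (1 - n) *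
          Real.exp ((n - 1) * SRenyi n (σ A) (τ A))) := by
  classical
  obtain ⟨hα0, hα1⟩ := hα
  have h1α : (0:ℝ) < 1 - α := by linarith
  have hn1 : 1 < n := by rw [hn, lt_div_iff₀ h1α]; linarith
  have hn1' : n - 1 ≠ 0 := by linarith
  have hna : n * α = n - 1 := by rw [hn]; field_simp; ring
  have hn1a : n * (1 - α) = 1 := by rw [hn]; field_simp
  have h1na : (1 - n) * (1 - α) = -α := by linear_combination -hn1a
  have hmono : (n - 1)⁻¹ = (1 - α) / α := by
    have hsub : n - 1 = α / (1 - α) := by rw [hn]; field_simp; ring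
    rw [hsub, inv_div]
  haveI hι : Nonempty ι := by
    by_contra hcon
    rw [not_nonempty_iff] at hcon
    rw [Finset.univ_eq_empty, Finset.sum_empty] at hq1
    exact zero_ne_one hq1
  have hmA : ∀ A, Nonempty (Fin (dA A)) := by
    intro A
    by_contra hcon
    rw [not_nonempty_iff] at hcon
    have htr := (hσ A).2
    rw [Matrix.trace, Finset.univ_eq_empty, Finset.sum_empty] at htr
    exact zero_ne_one htr
  have key : ∀ A : ι, ∃ T : ℝ, 0 < T ∧ Real.exp ((n - 1) * SRenyi n (σ A) (τ A)) = T ∧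
      (∀ ρ : Matrix (Fin (dA A)) (Fin (dA A)) ℂ, IsDensity ρ →
        0 < (mpow ρ α * mpow (σ A) (1 / 2) * mpow (τ A) (-α) * mpow (σ A) (1 / 2)).trace.re ∧
        (mpow ρ α * mpow (σ A) (1 / 2) * mpow (τ A) (-α) *
          mpow (σ A) (1 / 2)).trace.re ≤ T ^ (1 - α)) ∧
      (∃ ρ : Matrix (Fin (dA A)) (Fin (dA A)) ℂ, IsDensity ρ ∧
        (mpow ρ α * mpow (σ A) (1 / 2) * mpow (τ A) (-α) *
          mpow (σ A) (1 / 2)).trace.re = T ^ (1 - α)) := by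
    intro A
    haveI := hmA A
    exact SR15.block_key (hσpd A) (hτpd A) hα0 hα1 hn
  choose T hT using key
  have hT0 : ∀ A, 0 < T A := fun A => (hT A).1
  have hTexp : ∀ A, Real.exp ((n - 1) * SRenyi n (σ A) (τ A)) = T A := fun A => (hT A).2.1
  have hTbd := fun A => (hT A).2.2.1
  have hTach := fun A => (hT A).2.2.2
  set R := ∑ A, q A ^ n * w A ^ (1 - n) * T A with hRdef
  have hRpos : 0 < R :=
    Finset.sum_pos (fun A _ => mul_pos (mul_pos (Real.rpow_pos_of_pos (hq A) n)
      (Real.rpow_pos_of_pos (hw A) (1 - n))) (hT0 A)) Finset.univ_nonempty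
  have hRHS : (∑ A, q A ^ n * w A ^ (1 - n) * Real.exp ((n - 1) * SRenyi n (σ A) (τ A))) = R := by
    rw [hRdef]
    exact Finset.sum_congr rfl fun A _ => by rw [hTexp A]
  rw [hRHS]
  apply IsGreatest.csSup_eq
  constructor
  · -- the value is attained
    choose ρs hρs hρE using hTach
    refine ⟨fun A => q A ^ n * w A ^ (1 - n) * T A / R, ρs,
      fun A => div_nonneg (mul_pos (mul_pos (Real.rpow_pos_of_pos (hq A) n)
        (Real.rpow_pos_of_pos (hw A) (1 - n))) (hT0 A)).le hRpos.le, ?_, hρs, ?_⟩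
    · rw [← Finset.sum_div, ← hRdef, div_self hRpos.ne']
    · have hsum : (∑ A, q A * ((q A ^ n * w A ^ (1 - n) * T A / R) ^ α / w A ^ α) *
          ((mpow (ρs A) α * mpow (σ A) (1 / 2) * mpow (τ A) (-α) *
            mpow (σ A) (1 / 2)).trace.re)) = R ^ (1 - α) := by
        calc (∑ A, q A * ((q A ^ n * w A ^ (1 - n) * T A / R) ^ α / w A ^ α) *
              ((mpow (ρs A) α * mpow (σ A) (1 / 2) * mpow (τ A) (-α) *
                mpow (σ A) (1 / 2)).trace.re))
            = ∑ A, q A ^ n * w A ^ (1 - n) * T A / R ^ α := by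
              refine Finset.sum_congr rfl fun A _ => ?_
              rw [hρE A]
              exact SR15.scalar_opt (hq A) (hw A) (hT0 A) hRpos hna
          _ = R / R ^ α := by rw [← Finset.sum_div, ← hRdef]
          _ = R ^ (1 - α) := by rw [Real.rpow_sub hRpos, Real.rpow_one]
      rw [hsum, Real.log_rpow hRpos, hmono]
      ring
  · -- upper bound
    rintro t ⟨p, ρ, hp0, hp1, hρd, rfl⟩
    have hEpos : ∀ A, 0 < (mpow (ρ A) α * mpow (σ A) (1 / 2) * mpow (τ A) (-α) *
        mpow (σ A) (1 / 2)).trace.re := fun A => (hTbd A (ρ A) (hρd A)).1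
    have hEle : ∀ A, (mpow (ρ A) α * mpow (σ A) (1 / 2) * mpow (τ A) (-α) *
        mpow (σ A) (1 / 2)).trace.re ≤ T A ^ (1 - α) := fun A => (hTbd A (ρ A) (hρd A)).2
    have hS0 : 0 < ∑ A, q A * (p A ^ α / w A ^ α) *
        ((mpow (ρ A) α * mpow (σ A) (1 / 2) * mpow (τ A) (-α) *
          mpow (σ A) (1 / 2)).trace.re) := by
      obtain ⟨A0, -, hA0⟩ : ∃ A ∈ Finset.univ, 0 < p A := by
        by_contra hcon
        push_neg at hcon
        have hz : ∑ A, p A = 0 := Finset.sum_eq_zero fun A hA => le_antisymm (hcon A hA) (hp0 A)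
        rw [hp1] at hz
        exact one_ne_zero hz
      refine Finset.sum_pos' (fun A _ => ?_) ⟨A0, Finset.mem_univ A0, ?_⟩
      · exact mul_nonneg (mul_nonneg (hq A).le (div_nonneg (Real.rpow_nonneg (hp0 A) α)
          (Real.rpow_nonneg (hw A).le α))) (hEpos A).le
      · exact mul_pos (mul_pos (hq A0) (div_pos (Real.rpow_pos_of_pos hA0 α)
          (Real.rpow_pos_of_pos (hw A0) α))) (hEpos A0)
    have hle : (∑ A, q A * (p A ^ α / w A ^ α) *
        ((mpow (ρ A) α * mpow (σ A) (1 / 2) * mpow (τ A) (-α) *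
          mpow (σ A) (1 / 2)).trace.re)) ≤ R ^ (1 - α) := by
      calc (∑ A, q A * (p A ^ α / w A ^ α) *
            ((mpow (ρ A) α * mpow (σ A) (1 / 2) * mpow (τ A) (-α) *
              mpow (σ A) (1 / 2)).trace.re))
          ≤ ∑ A, p A ^ α * (q A ^ n * w A ^ (1 - n) * T A) ^ (1 - α) := by
            refine Finset.sum_le_sum fun A _ => ?_
            have h1 : q A * (p A ^ α / w A ^ α) *
                ((mpow (ρ A) α * mpow (σ A) (1 / 2) * mpow (τ A) (-α) *
                  mpow (σ A) (1 / 2)).trace.re)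
                ≤ q A * (p A ^ α / w A ^ α) * (T A ^ (1 - α)) :=
              mul_le_mul_of_nonneg_left (hEle A) (mul_nonneg (hq A).le
                (div_nonneg (Real.rpow_nonneg (hp0 A) α) (Real.rpow_nonneg (hw A).le α)))
            refine h1.trans_eq ?_
            rw [SR15.scalar_ub (hq A) (hw A) (hT0 A) hn1a h1na]
            ring
        _ ≤ R ^ (1 - α) :=
            SR15.holder_sum Finset.univ _ _ hα0 hα1 (fun A _ => hp0 A)
              (fun A _ => (mul_pos (mul_pos (Real.rpow_pos_of_pos (hq A) n)
                (Real.rpow_pos_of_pos (hw A) (1 - n))) (hT0 A)).le) hp1 hRpos hRdef.symm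
    calc (1 / α) * Real.log (∑ A, q A * (p A ^ α / w A ^ α) *
          ((mpow (ρ A) α * mpow (σ A) (1 / 2) * mpow (τ A) (-α) *
            mpow (σ A) (1 / 2)).trace.re))
        ≤ (1 / α) * Real.log (R ^ (1 - α)) := by
          refine mul_le_mul_of_nonneg_left ?_ (by positivity)
          exact (Real.log_le_log_iff hS0 (Real.rpow_pos_of_pos hRpos _)).mpr hle
      _ = (n - 1)⁻¹ * Real.log R := by
          rw [Real.log_rpow hRpos, hmono]
          ring
end

section
/- Araki relative entropy in the finite-dimensional block setting equals the algebraic relative entropy: let A range over a finite index set, let (p_A), (q_A) be probability distributions with strictly positive entries, and for each A let H_A be a finite-dimensional complex Hilbert space with orthonormal basis (e_i^A), let ρ_A and σ_A be positive definite density matrices on H_A, and let |ψ_A⟩ = (ρ_A^{1/2} ⊗ I) Σ_i e_i^A ⊗ e_i^A ∈ H_A ⊗ H_A and |Ψ⟩ = ⊕_A √p_A |ψ_A⟩ ∈ ⊕_A (H_A ⊗ H_A). Define Δ = ⊕_A (q_A/p_A) σ_A ⊗ (ρ̄_A)^{−1}, where ρ̄_A is the reduced density matrix of |ψ_A⟩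 on the second factor. Then −⟨Ψ| log Δ |Ψ⟩ = Σ_A p_A log(p_A/q_A) + Σ_A p_A [Tr(ρ_A log ρ_A) − Tr(ρ_A log σ_A)]. -/
open Matrix
open scoped Kronecker ComplexOrder

section Helpers

variable {m : Type*} [Fintype m] [DecidableEq m]

/-- Uniqueness of the functional calculus across two unitary diagonalizations. -/
lemma funcalc_unique (U₁ U₂ : Matrix m m ℂ) (h₁ : U₁ ∈ Matrix.unitaryGroup m ℂ)
    (h₂ : U₂ ∈ Matrix.unitaryGroup m ℂ) (d₁ d₂ : m → ℝ) (g : ℝ → ℝ)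
    (h : U₁ * Matrix.diagonal (fun i => (d₁ i : ℂ)) * star U₁
        = U₂ * Matrix.diagonal (fun i => (d₂ i : ℂ)) * star U₂) :
    U₁ * Matrix.diagonal (fun i => ((g (d₁ i) : ℝ) : ℂ)) * star U₁
        = U₂ * Matrix.diagonal (fun i => ((g (d₂ i) : ℝ) : ℂ)) * star U₂ := by
  have h₁' : star U₁ * U₁ = 1 := (Matrix.mem_unitaryGroup_iff').mp h₁
  have h₁'' : U₁ * star U₁ = 1 := (Matrix.mem_unitaryGroup_iff).mp h₁
  have h₂' : star U₂ * U₂ = 1 := (Matrix.mem_unitaryGroup_iff').mp h₂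
  have h₂'' : U₂ * star U₂ = 1 := (Matrix.mem_unitaryGroup_iff).mp h₂
  set W : Matrix m m ℂ := star U₂ * U₁ with hW
  have key : W * Matrix.diagonal (fun i => (d₁ i : ℂ))
      = Matrix.diagonal (fun i => (d₂ i : ℂ)) * W := by
    have := congrArg (fun M => star U₂ * M * U₁) h
    calc W * Matrix.diagonal (fun i => (d₁ i : ℂ))
        = star U₂ * (U₁ * Matrix.diagonal (fun i => (d₁ i : ℂ)) * star U₁) * U₁ := by
          rw [hW]; rw [mul_assoc (star U₂) U₁ _]
          rw [mul_assoc (star U₂) _ U₁, mul_assoc, mul_assoc, h₁', mul_one]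
      _ = star U₂ * (U₂ * Matrix.diagonal (fun i => (d₂ i : ℂ)) * star U₂) * U₁ := by rw [h]
      _ = Matrix.diagonal (fun i => (d₂ i : ℂ)) * W := by
          rw [hW, ← mul_assoc, ← mul_assoc, ← mul_assoc, h₂', one_mul, mul_assoc]
  have key2 : W * Matrix.diagonal (fun i => ((g (d₁ i) : ℝ) : ℂ))
      = Matrix.diagonal (fun i => ((g (d₂ i) : ℝ) : ℂ)) * W := by
    ext i j
    have hk := congrFun (congrFun key i) j
    rw [Matrix.mul_diagonal, Matrix.diagonal_mul] at hk
    rw [Matrix.mul_diagonal, Matrix.diagonal_mul]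
    rcases eq_or_ne (W i j) 0 with h0 | h0
    · rw [h0, zero_mul, mul_zero]
    · have : (d₁ j : ℂ) = (d₂ i : ℂ) := by
        rcases mul_eq_mul_right_iff.mp
            ((mul_comm (W i j) (d₁ j : ℂ)).symm ▸ hk).symm with hk' | hk'
        · exact hk'.symm
        · exact absurd hk' h0
      have : d₁ j = d₂ i := by exact_mod_cast this
      rw [this, mul_comm]
  have hU₁W : U₁ = U₂ * W := by rw [hW, ← mul_assoc, h₂'', one_mul]
  have hWstar : W * star U₁ = star U₂ := by rw [hW, mul_assoc, h₁'', mul_one]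
  calc U₁ * Matrix.diagonal (fun i => ((g (d₁ i) : ℝ) : ℂ)) * star U₁
      = U₂ * (W * Matrix.diagonal (fun i => ((g (d₁ i) : ℝ) : ℂ))) * star U₁ := by
        rw [hU₁W, mul_assoc U₂ W _]
    _ = U₂ * (Matrix.diagonal (fun i => ((g (d₂ i) : ℝ) : ℂ)) * W) * star U₁ := by rw [key2]
    _ = U₂ * Matrix.diagonal (fun i => ((g (d₂ i) : ℝ) : ℂ)) * (W * star U₁) := by
        rw [← mul_assoc, mul_assoc _ _ (star U₁), ← mul_assoc]
    _ = U₂ * Matrix.diagonal (fun i => ((g (d₂ i) : ℝ) : ℂ)) * star U₂ := by rw [hWstar]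

lemma UDU_isHermitian (U : Matrix m m ℂ) (d : m → ℝ) :
    (U * Matrix.diagonal (fun i => (d i : ℂ)) * star U).IsHermitian := by
  have hd : (Matrix.diagonal (fun i => (d i : ℂ)))ᴴ = Matrix.diagonal (fun i => (d i : ℂ)) := by
    rw [Matrix.diagonal_conjTranspose]
    ext i j
    rcases eq_or_ne i j with rfl | hne
    · simp [Complex.conj_ofReal]
    · simp [Matrix.diagonal_apply_ne _ hne]
  unfold Matrix.IsHermitian
  rw [Matrix.conjTranspose_mul, Matrix.conjTranspose_mul, hd,
    Matrix.star_eq_conjTranspose, Matrix.conjTranspose_conjTranspose, mul_assoc]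

lemma mlog_eq_of_decomp (A U : Matrix m m ℂ) (hU : U ∈ Matrix.unitaryGroup m ℂ) (d : m → ℝ)
    (hA : A = U * Matrix.diagonal (fun i => (d i : ℂ)) * star U) :
    mlog A = U * Matrix.diagonal (fun i => ((Real.log (d i) : ℝ) : ℂ)) * star U := by
  have hH : A.IsHermitian := hA ▸ UDU_isHermitian U d
  have hspec := hH.spectral_theorem
  have hUeig : (hH.eigenvectorUnitary : Matrix m m ℂ) ∈ Matrix.unitaryGroup m ℂ :=
    hH.eigenvectorUnitary.2
  have hdec : (hH.eigenvectorUnitary : Matrix m m ℂ)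
      * Matrix.diagonal (fun i => ((hH.eigenvalues i : ℝ) : ℂ))
      * star (hH.eigenvectorUnitary : Matrix m m ℂ)
      = U * Matrix.diagonal (fun i => (d i : ℂ)) * star U := by
    have hdiag : Matrix.diagonal (fun i => ((hH.eigenvalues i : ℝ) : ℂ))
        = Matrix.diagonal (RCLike.ofReal ∘ hH.eigenvalues) := rfl
    rw [hdiag, ← hA]
    exact hspec.symm
  have := funcalc_unique _ U hUeig hU hH.eigenvalues d Real.log hdec
  rw [show mlog A = (hH.eigenvectorUnitary : Matrix m m ℂ) *
      Matrix.diagonal (fun i => ((Real.log (hH.eigenvalues i) : ℝ) : ℂ)) *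
      star (hH.eigenvectorUnitary : Matrix m m ℂ) from by rw [mlog, dif_pos hH]]
  exact this

omit [Fintype m] [DecidableEq m] in
lemma star_kronecker {n : Type*} [Fintype n] [DecidableEq n]
    (A : Matrix m m ℂ) (B : Matrix n n ℂ) :
    star (A ⊗ₖ B) = (star A) ⊗ₖ (star B) := by
  ext ⟨i, j⟩ ⟨k, l⟩
  simp [Matrix.star_eq_conjTranspose, Matrix.conjTranspose_apply]

lemma kronecker_mem_unitary {n : Type*} [Fintype n] [DecidableEq n]
    (A : Matrix m m ℂ) (B : Matrix n n ℂ) (hA : A ∈ Matrix.unitaryGroup m ℂ)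
    (hB : B ∈ Matrix.unitaryGroup n ℂ) : A ⊗ₖ B ∈ Matrix.unitaryGroup (m × n) ℂ := by
  rw [Matrix.mem_unitaryGroup_iff]
  rw [star_kronecker, ← Matrix.mul_kronecker_mul, Matrix.mem_unitaryGroup_iff.mp hA,
    Matrix.mem_unitaryGroup_iff.mp hB, Matrix.one_kronecker_one]

lemma blockDiagonal'_mem_unitary {ι : Type*} [Fintype ι] [DecidableEq ι] {md : ι → Type*}
    [∀ A, Fintype (md A)] [∀ A, DecidableEq (md A)]
    (M : ∀ A, Matrix (md A) (md A) ℂ) (h : ∀ A, M A ∈ Matrix.unitaryGroup (md A) ℂ) :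
    Matrix.blockDiagonal' M ∈ Matrix.unitaryGroup ((A : ι) × md A) ℂ := by
  rw [Matrix.mem_unitaryGroup_iff, Matrix.star_eq_conjTranspose,
    Matrix.blockDiagonal'_conjTranspose, ← Matrix.blockDiagonal'_mul]
  have : (fun A => M A * (M A)ᴴ) = fun A => (1 : Matrix (md A) (md A) ℂ) := by
    funext A
    rw [← Matrix.star_eq_conjTranspose, Matrix.mem_unitaryGroup_iff.mp (h A)]
  rw [this]
  exact Matrix.blockDiagonal'_one

lemma blockDiagonal'_mulVec {ι : Type*} [Fintype ι] [DecidableEq ι] {md : ι → Type*}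
    [∀ A, Fintype (md A)] [∀ A, DecidableEq (md A)]
    (M : ∀ A, Matrix (md A) (md A) ℂ) (v : ((A : ι) × md A) → ℂ) (A : ι) (i : md A) :
    (Matrix.blockDiagonal' M *ᵥ v) ⟨A, i⟩ = ∑ j, M A i j * v ⟨A, j⟩ := by
  rw [Matrix.mulVec, dotProduct, ← Finset.univ_sigma_univ, Finset.sum_sigma]
  rw [Finset.sum_eq_single A]
  · apply Finset.sum_congr rfl
    intro j _
    rw [Matrix.blockDiagonal'_apply_eq]
  · intro B _ hB
    apply Finset.sum_eq_zero
    intro j _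
    rw [Matrix.blockDiagonal'_apply_ne _ _ _ (Ne.symm hB), zero_mul]
  · intro h
    exact absurd (Finset.mem_univ A) h

lemma UDU_mul (U D₁ D₂ : Matrix m m ℂ) (hU : star U * U = 1) :
    (U * D₁ * star U) * (U * D₂ * star U) = U * (D₁ * D₂) * star U := by
  calc (U * D₁ * star U) * (U * D₂ * star U)
      = U * D₁ * (star U * U) * D₂ * star U := by
        simp only [mul_assoc]
    _ = U * (D₁ * D₂) * star U := by rw [hU, mul_one]; simp only [mul_assoc]

lemma UDU_trace (U D : Matrix m m ℂ) (hU : star U * U = 1) :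
    (U * D * star U).trace = D.trace := by
  rw [Matrix.trace_mul_cycle, hU, one_mul]

end Helpers

/-- Araki's relative entropy `-⟨Ψ| log Δ |Ψ⟩` in the finite-dimensional block
setting equals the algebraic relative entropy
`Σ_A p_A log(p_A/q_A) + Σ_A p_A [Tr(ρ_A log ρ_A) - Tr(ρ_A log σ_A)]`, where
`|Ψ⟩ = ⊕_A √p_A (ρ_A^{1/2} ⊗ I) Σ_i e_i ⊗ e_i` and
`Δ = ⊕_A (q_A/p_A) σ_A ⊗ (ρ̄_A)⁻¹`, with `ρ̄_A` the reduced density matrix of `|ψ_A⟩` on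
the second tensor factor. -/
theorem araki_relEnt_block {ι : Type*} [Fintype ι] [DecidableEq ι] (dA : ι → ℕ)
    (p q : ι → ℝ) (hp : ∀ A, 0 < p A) (hp1 : ∑ A, p A = 1)
    (hq : ∀ A, 0 < q A) (hq1 : ∑ A, q A = 1)
    (ρ σ : ∀ A, Matrix (Fin (dA A)) (Fin (dA A)) ℂ)
    (hρ : ∀ A, IsDensity (ρ A)) (hσ : ∀ A, IsDensity (σ A))
    (hρpd : ∀ A, (ρ A).PosDef) (hσpd : ∀ A, (σ A).PosDef)
    -- the purifications `|ψ_A⟩ = (ρ_A^{1/2} ⊗ I) Σ_i e_i ⊗ e_i`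
    (ψ : ∀ A, Fin (dA A) × Fin (dA A) → ℂ)
    (hψ : ∀ A, ψ A = fun ij => mpow (ρ A) (1 / 2) ij.1 ij.2)
    -- the global vector `|Ψ⟩ = ⊕_A √p_A |ψ_A⟩`
    (Ψ : ((A : ι) × (Fin (dA A) × Fin (dA A))) → ℂ)
    (hΨ : ∀ A ij, Ψ ⟨A, ij⟩ = (Real.sqrt (p A) : ℂ) * ψ A ij)
    -- the reduced density matrices of `|ψ_A⟩` on the second factor
    (ρbar : ∀ A, Matrix (Fin (dA A)) (Fin (dA A)) ℂ)
    (hρbar : ∀ A, ρbar A = Matrix.of fun b b' => ∑ a, ψ A (a, b) * star (ψ A (a, b')))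
    -- the relative modular operator `Δ = ⊕_A (q_A/p_A) σ_A ⊗ (ρ̄_A)⁻¹`
    (Δ : Matrix ((A : ι) × (Fin (dA A) × Fin (dA A)))
        ((A : ι) × (Fin (dA A) × Fin (dA A))) ℂ)
    (hΔ : Δ = Matrix.blockDiagonal' (fun A => ((q A / p A : ℝ) : ℂ) • (σ A ⊗ₖ (ρbar A)⁻¹))) :
    -(star Ψ ⬝ᵥ ((mlog Δ) *ᵥ Ψ)).re =
      ∑ A, p A * Real.log (p A / q A) +
        ∑ A, p A * ((ρ A * mlog (ρ A)).trace - (ρ A * mlog (σ A)).trace).re := by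
  classical
  have hρh : ∀ A, (ρ A).IsHermitian := fun A => (hρpd A).1
  have hσh : ∀ A, (σ A).IsHermitian := fun A => (hσpd A).1
  set W : ∀ A, Matrix (Fin (dA A)) (Fin (dA A)) ℂ :=
    fun A => ((hρh A).eigenvectorUnitary : Matrix _ _ ℂ) with hWdef
  set f : ∀ A, Fin (dA A) → ℝ := fun A => (hρh A).eigenvalues with hfdef
  set V : ∀ A, Matrix (Fin (dA A)) (Fin (dA A)) ℂ :=
    fun A => ((hσh A).eigenvectorUnitary : Matrix _ _ ℂ) with hVdef
  set e : ∀ A, Fin (dA A) → ℝ := fun A => (hσh A).eigenvalues with hedef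
  have hWmem : ∀ A, W A ∈ Matrix.unitaryGroup (Fin (dA A)) ℂ :=
    fun A => ((hρh A).eigenvectorUnitary).2
  have hVmem : ∀ A, V A ∈ Matrix.unitaryGroup (Fin (dA A)) ℂ :=
    fun A => ((hσh A).eigenvectorUnitary).2
  have hWW : ∀ A, star (W A) * W A = 1 := fun A => Matrix.mem_unitaryGroup_iff'.mp (hWmem A)
  have hWW' : ∀ A, W A * star (W A) = 1 := fun A => Matrix.mem_unitaryGroup_iff.mp (hWmem A)
  have hVV : ∀ A, star (V A) * V A = 1 := fun A => Matrix.mem_unitaryGroup_iff'.mp (hVmem A)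
  have hfpos : ∀ A j, 0 < f A j := fun A j => (hρpd A).eigenvalues_pos j
  have hepos : ∀ A i, 0 < e A i := fun A i => (hσpd A).eigenvalues_pos i
  have hρspec : ∀ A, ρ A = W A * Matrix.diagonal (fun j => (f A j : ℂ)) * star (W A) :=
    fun A => (hρh A).spectral_theorem
  have hσspec : ∀ A, σ A = V A * Matrix.diagonal (fun i => (e A i : ℂ)) * star (V A) :=
    fun A => (hσh A).spectral_theorem
  have hr : ∀ A, mpow (ρ A) (1 / 2)
      = W A * Matrix.diagonal (fun j => ((f A j ^ ((1:ℝ) / 2) : ℝ) : ℂ)) * star (W A) := by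
    intro A
    rw [mpow, dif_pos (hρh A)]
  have hrH : ∀ A, star (mpow (ρ A) (1 / 2)) = mpow (ρ A) (1 / 2) := by
    intro A
    rw [hr A]
    exact UDU_isHermitian (W A) (fun j => f A j ^ ((1:ℝ) / 2))
  have hrr : ∀ A, mpow (ρ A) (1 / 2) * mpow (ρ A) (1 / 2) = ρ A := by
    intro A
    rw [hr A, UDU_mul _ _ _ (hWW A), Matrix.diagonal_mul_diagonal]
    rw [hρspec A]
    have hd : (fun i => ((f A i ^ ((1:ℝ)/2) : ℝ) : ℂ) * ((f A i ^ ((1:ℝ)/2) : ℝ) : ℂ))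
        = fun i => ((f A i : ℝ) : ℂ) := by
      funext i
      rw [← Complex.ofReal_mul, ← Real.rpow_add (hfpos A i)]
      norm_num
    rw [hd]
  -- the reduced density matrix is the transpose of ρ
  have hrbarT : ∀ A, ρbar A = (ρ A)ᵀ := by
    intro A
    rw [hρbar A]
    ext b b'
    simp only [Matrix.of_apply, Matrix.transpose_apply]
    have h1 : ∑ a, ψ A (a, b) * star (ψ A (a, b'))
        = star ((star (mpow (ρ A) (1/2)) * mpow (ρ A) (1/2)) b b') := by
      rw [Matrix.mul_apply, star_sum]
      apply Finset.sum_congr rfl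
      intro a _
      rw [hψ A]
      simp only [Matrix.star_eq_conjTranspose, Matrix.conjTranspose_apply]
      rw [star_mul', star_star]
    rw [h1, hrH A, hrr A]
    conv_rhs => rw [← hρh A]
    rw [Matrix.conjTranspose_apply]
  -- the conjugate unitary
  set Wc : ∀ A, Matrix (Fin (dA A)) (Fin (dA A)) ℂ := fun A => (star (W A))ᵀ with hWcdef
  have hWc_star : ∀ A, star (Wc A) = (W A)ᵀ := by
    intro A
    ext i j
    simp only [hWcdef, Matrix.star_eq_conjTranspose, Matrix.conjTranspose_apply,
      Matrix.transpose_apply, star_star]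
  have hWcmem : ∀ A, Wc A ∈ Matrix.unitaryGroup (Fin (dA A)) ℂ := by
    intro A
    rw [Matrix.mem_unitaryGroup_iff, hWc_star, hWcdef, ← Matrix.transpose_mul, hWW' A,
      Matrix.transpose_one]
  have hWcWc : ∀ A, star (Wc A) * Wc A = 1 := fun A => Matrix.mem_unitaryGroup_iff'.mp (hWcmem A)
  -- inverse of the reduced density matrix
  have hrbarinv : ∀ A, (ρbar A)⁻¹
      = Wc A * Matrix.diagonal (fun j => (((f A j)⁻¹ : ℝ) : ℂ)) * star (Wc A) := by
    intro A
    apply Matrix.inv_eq_right_inv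
    rw [hrbarT A, hρspec A, Matrix.transpose_mul, Matrix.transpose_mul,
      Matrix.diagonal_transpose]
    calc (star (W A))ᵀ * (Matrix.diagonal (fun j => (f A j : ℂ)) * (W A)ᵀ)
        * (Wc A * Matrix.diagonal (fun j => (((f A j)⁻¹ : ℝ) : ℂ)) * star (Wc A))
        = Wc A * (Matrix.diagonal (fun j => (f A j : ℂ)) * (((W A)ᵀ * Wc A)
          * (Matrix.diagonal (fun j => (((f A j)⁻¹ : ℝ) : ℂ)) * star (Wc A)))) := by
          rw [hWcdef]
          simp only [mul_assoc]
      _ = Wc A * (Matrix.diagonal (fun j => (f A j : ℂ))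
          * Matrix.diagonal (fun j => (((f A j)⁻¹ : ℝ) : ℂ))) * star (Wc A) := by
          rw [hWcdef, ← Matrix.transpose_mul, hWW A, Matrix.transpose_one, one_mul]
          simp only [mul_assoc]
      _ = Wc A * star (Wc A) := by
          rw [Matrix.diagonal_mul_diagonal]
          have hone : (fun j => ((f A j : ℝ) : ℂ) * (((f A j)⁻¹ : ℝ) : ℂ))
              = fun _ => (1 : ℂ) := by
            funext j
            rw [← Complex.ofReal_mul, mul_inv_cancel₀ (ne_of_gt (hfpos A j))]
            norm_num
          rw [hone, Matrix.diagonal_one, mul_one]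
      _ = 1 := Matrix.mem_unitaryGroup_iff.mp (hWcmem A)
  -- decomposition of Δ
  set 𝒱 : ∀ A, Matrix (Fin (dA A) × Fin (dA A)) (Fin (dA A) × Fin (dA A)) ℂ :=
    fun A => V A ⊗ₖ Wc A with h𝒱def
  set dval : ∀ A, Fin (dA A) × Fin (dA A) → ℝ :=
    fun A ij => q A / p A * (e A ij.1 * (f A ij.2)⁻¹) with hdvaldef
  have hdvalpos : ∀ A ij, 0 < dval A ij := by
    intro A ij
    exact mul_pos (div_pos (hq A) (hp A))
      (mul_pos (hepos A ij.1) (inv_pos.mpr (hfpos A ij.2)))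
  have hblock : ∀ A, ((q A / p A : ℝ) : ℂ) • (σ A ⊗ₖ (ρbar A)⁻¹)
      = 𝒱 A * Matrix.diagonal (fun ij => (dval A ij : ℂ)) * star (𝒱 A) := by
    intro A
    rw [hσspec A, hrbarinv A, Matrix.mul_kronecker_mul, Matrix.mul_kronecker_mul,
      Matrix.diagonal_kronecker_diagonal, ← star_kronecker, ← smul_mul_assoc,
      ← mul_smul_comm]
    rw [h𝒱def]
    have harg : ((q A / p A : ℝ) : ℂ) • Matrix.diagonal
        (fun mn : Fin (dA A) × Fin (dA A) => ((e A mn.1 : ℝ) : ℂ) * (((f A mn.2)⁻¹ : ℝ) : ℂ))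
        = Matrix.diagonal (fun ij => ((dval A ij : ℝ) : ℂ)) := by
      rw [hdvaldef, ← Matrix.diagonal_smul]
      ext ij kl
      rcases eq_or_ne ij kl with rfl | hne
      · simp only [Matrix.diagonal_apply_eq, Pi.smul_apply, smul_eq_mul]
        push_cast
        ring
      · rw [Matrix.diagonal_apply_ne _ hne, Matrix.diagonal_apply_ne _ hne]
    rw [harg]
  have h𝒱mem : ∀ A, 𝒱 A ∈ Matrix.unitaryGroup (Fin (dA A) × Fin (dA A)) ℂ :=
    fun A => kronecker_mem_unitary _ _ (hVmem A) (hWcmem A)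
  set 𝒰 := Matrix.blockDiagonal' 𝒱 with h𝒰def
  have h𝒰mem : 𝒰 ∈ Matrix.unitaryGroup ((A : ι) × (Fin (dA A) × Fin (dA A))) ℂ :=
    blockDiagonal'_mem_unitary _ h𝒱mem
  have hstar𝒰 : star 𝒰 = Matrix.blockDiagonal' (fun A => star (𝒱 A)) := by
    rw [h𝒰def, Matrix.star_eq_conjTranspose, Matrix.blockDiagonal'_conjTranspose]
    rfl
  have hΔdec : Δ = 𝒰 * Matrix.diagonal
      (fun k : (A : ι) × (Fin (dA A) × Fin (dA A)) => (dval k.1 k.2 : ℂ)) * star 𝒰 := by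
    rw [hΔ]
    have hfun : (fun A => ((q A / p A : ℝ) : ℂ) • (σ A ⊗ₖ (ρbar A)⁻¹))
        = fun A => 𝒱 A * Matrix.diagonal (fun ij => (dval A ij : ℂ)) * star (𝒱 A) :=
      funext hblock
    rw [hfun, Matrix.blockDiagonal'_mul, Matrix.blockDiagonal'_mul,
      Matrix.blockDiagonal'_diagonal, ← hstar𝒰, ← h𝒰def]
  have hmlogΔ : mlog Δ = 𝒰 * Matrix.diagonal
      (fun k : (A : ι) × (Fin (dA A) × Fin (dA A))
        => ((Real.log (dval k.1 k.2) : ℝ) : ℂ)) * star 𝒰 :=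
    mlog_eq_of_decomp Δ 𝒰 h𝒰mem _ hΔdec
  have hψ' : ∀ A a b, ψ A (a, b) = mpow (ρ A) (1 / 2) a b := fun A a b => by rw [hψ A]
  -- the transformed vector
  set Mz : ∀ A, Matrix (Fin (dA A)) (Fin (dA A)) ℂ := fun A => star (V A) * W A with hMzdef
  have hMzmem : ∀ A, Mz A ∈ Matrix.unitaryGroup (Fin (dA A)) ℂ :=
    fun A => mul_mem (Unitary.star_mem (hVmem A)) (hWmem A)
  set c : ((A : ι) × (Fin (dA A) × Fin (dA A))) → ℂ := star 𝒰 *ᵥ Ψ with hcdef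
  have hval : star Ψ ⬝ᵥ (mlog Δ *ᵥ Ψ)
      = ∑ k, ((Real.log (dval k.1 k.2) : ℝ) : ℂ) * (star (c k) * c k) := by
    rw [hmlogΔ, ← Matrix.mulVec_mulVec, ← Matrix.mulVec_mulVec, Matrix.dotProduct_mulVec]
    have h1 : star Ψ ᵥ* 𝒰 = star c := by
      rw [hcdef, Matrix.star_mulVec]
      rw [Matrix.star_eq_conjTranspose, Matrix.conjTranspose_conjTranspose]
    rw [h1, dotProduct]
    apply Finset.sum_congr rfl
    intro k _
    rw [Matrix.mulVec_diagonal]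
    simp only [Pi.star_apply]
    ring
  have hc : ∀ A (i j : Fin (dA A)), c ⟨A, (i, j)⟩
      = (Real.sqrt (p A) : ℂ) * ((f A j ^ ((1:ℝ)/2) : ℝ) : ℂ) * Mz A i j := by
    intro A i j
    rw [hcdef, hstar𝒰, blockDiagonal'_mulVec]
    have hsv : ∀ (a b : Fin (dA A)), star (𝒱 A) (i, j) (a, b)
        = star (V A a i) * W A b j := by
      intro a b
      rw [h𝒱def, star_kronecker, hWc_star A]
      rw [show (star (V A) ⊗ₖ (W A)ᵀ) (i, j) (a, b)
          = star (V A) i a * (W A)ᵀ j b from rfl]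
      rw [Matrix.star_eq_conjTranspose, Matrix.conjTranspose_apply, Matrix.transpose_apply]
    have hin : ∀ a, (∑ b, mpow (ρ A) (1/2) a b * W A b j)
        = W A a j * ((f A j ^ ((1:ℝ)/2) : ℝ) : ℂ) := by
      intro a
      have hrW : mpow (ρ A) (1/2) * W A
          = W A * Matrix.diagonal (fun j => ((f A j ^ ((1:ℝ)/2) : ℝ) : ℂ)) := by
        rw [hr A, mul_assoc, hWW A, mul_one]
      calc (∑ b, mpow (ρ A) (1/2) a b * W A b j)
          = (mpow (ρ A) (1/2) * W A) a j := (Matrix.mul_apply).symm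
        _ = W A a j * ((f A j ^ ((1:ℝ)/2) : ℝ) : ℂ) := by
            rw [hrW, Matrix.mul_diagonal]
    rw [Fintype.sum_prod_type]
    have h2 : ∀ a, (∑ b, star (𝒱 A) (i, j) (a, b) * Ψ ⟨A, (a, b)⟩)
        = (Real.sqrt (p A) : ℂ) * ((f A j ^ ((1:ℝ)/2) : ℝ) : ℂ)
          * (star (V A a i) * W A a j) := by
      intro a
      have h3 : (∑ b, star (𝒱 A) (i, j) (a, b) * Ψ ⟨A, (a, b)⟩)
          = (Real.sqrt (p A) : ℂ) * star (V A a i)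
            * (∑ b, mpow (ρ A) (1/2) a b * W A b j) := by
        rw [Finset.mul_sum]
        apply Finset.sum_congr rfl
        intro b _
        rw [hsv a b, hΨ A, hψ' A]
        ring
      rw [h3, hin a]
      ring
    rw [Finset.sum_congr rfl (fun a _ => h2 a), ← Finset.mul_sum]
    have h4 : (∑ a, star (V A a i) * W A a j) = Mz A i j := by
      rw [show Mz A = star (V A) * W A from rfl, Matrix.mul_apply]
      apply Finset.sum_congr rfl
      intro a _
      rw [Matrix.star_eq_conjTranspose, Matrix.conjTranspose_apply]
    rw [h4]
  -- entry norms
  have hkey : ∀ A (i j : Fin (dA A)), star (c ⟨A, (i, j)⟩) * c ⟨A, (i, j)⟩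
      = ((p A * (f A j * Complex.normSq (Mz A i j)) : ℝ) : ℂ) := by
    intro A i j
    have hsq : Real.sqrt (p A) * Real.sqrt (p A) = p A := Real.mul_self_sqrt (le_of_lt (hp A))
    have hfq : f A j ^ ((1:ℝ)/2) * f A j ^ ((1:ℝ)/2) = f A j := by
      rw [← Real.rpow_add (hfpos A j)]
      norm_num
    rw [hc A i j]
    trans ((Real.sqrt (p A) : ℂ) * (Real.sqrt (p A) : ℂ))
      * (((f A j ^ ((1:ℝ)/2) : ℝ) : ℂ) * ((f A j ^ ((1:ℝ)/2) : ℝ) : ℂ)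
        * (Mz A i j * star (Mz A i j)))
    · simp only [star_mul', Complex.star_def, Complex.conj_ofReal]
      ring
    · rw [← Complex.ofReal_mul, hsq, ← Complex.ofReal_mul, hfq,
        show star (Mz A i j) = (starRingEnd ℂ) (Mz A i j) from rfl, Complex.mul_conj]
      push_cast
      ring
  -- the quadratic form as a real sum
  have hre : (star Ψ ⬝ᵥ (mlog Δ *ᵥ Ψ)).re
      = ∑ A, ∑ i, ∑ j, Real.log (dval A (i, j))
          * (p A * (f A j * Complex.normSq (Mz A i j))) := by
    rw [hval]
    have hterm : ∀ k : (A : ι) × (Fin (dA A) × Fin (dA A)),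
        ((Real.log (dval k.1 k.2) : ℝ) : ℂ) * (star (c k) * c k)
        = ((Real.log (dval k.1 k.2)
            * (p k.1 * (f k.1 k.2.2 * Complex.normSq (Mz k.1 k.2.1 k.2.2))) : ℝ) : ℂ) := by
      rintro ⟨A, i, j⟩
      rw [hkey A i j, ← Complex.ofReal_mul]
    rw [Finset.sum_congr rfl (fun k _ => hterm k)]
    rw [← Complex.ofReal_sum, Complex.ofReal_re]
    rw [← Finset.univ_sigma_univ, Finset.sum_sigma]
    apply Finset.sum_congr rfl
    intro A _
    rw [Fintype.sum_prod_type]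
  -- eigenvalues of ρ sum to 1
  have hfs : ∀ A, ∑ j, f A j = 1 := by
    intro A
    have h1 : (ρ A).trace = (Matrix.diagonal fun j => ((f A j : ℝ) : ℂ)).trace := by
      conv_lhs => rw [hρspec A]
      exact UDU_trace _ _ (hWW A)
    rw [(hρ A).2, Matrix.trace_diagonal] at h1
    have h2 : ((∑ j, f A j : ℝ) : ℂ) = 1 := by
      push_cast
      rw [← h1]
    exact_mod_cast h2
  -- columns of the unitary Mz are normalized
  have hcol : ∀ A j, ∑ i, Complex.normSq (Mz A i j) = 1 := by
    intro A j
    have h1 : (star (Mz A) * Mz A) j j = 1 := by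
      rw [Matrix.mem_unitaryGroup_iff'.mp (hMzmem A), Matrix.one_apply_eq]
    rw [Matrix.mul_apply] at h1
    have h2 : ∀ i, (star (Mz A)) j i * Mz A i j
        = ((Complex.normSq (Mz A i j) : ℝ) : ℂ) := by
      intro i
      rw [Matrix.star_eq_conjTranspose, Matrix.conjTranspose_apply, mul_comm,
        show star (Mz A i j) = (starRingEnd ℂ) (Mz A i j) from rfl, Complex.mul_conj]
    rw [Finset.sum_congr rfl (fun i _ => h2 i)] at h1
    have h3 : ((∑ i, Complex.normSq (Mz A i j) : ℝ) : ℂ) = 1 := by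
      push_cast
      rw [← h1]
    exact_mod_cast h3
  -- trace of ρ log ρ
  have htrρ : ∀ A, (ρ A * mlog (ρ A)).trace
      = ((∑ j, f A j * Real.log (f A j) : ℝ) : ℂ) := by
    intro A
    have hmlogρ : mlog (ρ A)
        = W A * Matrix.diagonal (fun j => ((Real.log (f A j) : ℝ) : ℂ)) * star (W A) := by
      rw [mlog, dif_pos (hρh A)]
    rw [hmlogρ]
    conv_lhs => rw [hρspec A]
    rw [UDU_mul _ _ _ (hWW A), UDU_trace _ _ (hWW A), Matrix.diagonal_mul_diagonal,
      Matrix.trace_diagonal]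
    push_cast
    rfl
  -- trace of ρ log σ
  have htrσ : ∀ A, (ρ A * mlog (σ A)).trace
      = ((∑ j, ∑ i, f A j * Real.log (e A i) * Complex.normSq (Mz A i j) : ℝ) : ℂ) := by
    intro A
    have hmlogσ : mlog (σ A)
        = V A * Matrix.diagonal (fun i => ((Real.log (e A i) : ℝ) : ℂ)) * star (V A) := by
      rw [mlog, dif_pos (hσh A)]
    have hsm : star (Mz A) = star (W A) * V A := by
      rw [show Mz A = star (V A) * W A from rfl, Matrix.star_mul, star_star]
    have hprod : ρ A * mlog (σ A)
        = W A * (Matrix.diagonal (fun j => ((f A j : ℝ) : ℂ)) * ((star (W A) * V A)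
          * (Matrix.diagonal (fun i => ((Real.log (e A i) : ℝ) : ℂ)) * star (V A)))) := by
      rw [hmlogσ]
      conv_lhs => rw [hρspec A]
      simp only [mul_assoc]
    have htr2 : (ρ A * mlog (σ A)).trace
        = (Matrix.diagonal (fun j => ((f A j : ℝ) : ℂ)) * (star (Mz A)
          * (Matrix.diagonal (fun i => ((Real.log (e A i) : ℝ) : ℂ)) * Mz A))).trace := by
      rw [hprod, Matrix.trace_mul_comm]
      congr 1
      rw [hsm, show Mz A = star (V A) * W A from rfl]
      simp only [mul_assoc]
    rw [htr2, Matrix.trace, Complex.ofReal_sum]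
    apply Finset.sum_congr rfl
    intro j _
    rw [Matrix.diag_apply, Matrix.diagonal_mul, Matrix.mul_apply, Finset.mul_sum,
      Complex.ofReal_sum]
    apply Finset.sum_congr rfl
    intro i _
    rw [Matrix.diagonal_mul, Matrix.star_eq_conjTranspose, Matrix.conjTranspose_apply]
    trans ((f A j : ℂ) * ((Real.log (e A i) : ℝ) : ℂ) * (Mz A i j * star (Mz A i j)))
    · ring
    · rw [show star (Mz A i j) = (starRingEnd ℂ) (Mz A i j) from rfl, Complex.mul_conj]
      push_cast
      ring
  -- final assembly
  rw [hre, ← Finset.sum_add_distrib, ← Finset.sum_neg_distrib]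
  apply Finset.sum_congr rfl
  intro A _
  have hdiff : ((ρ A * mlog (ρ A)).trace - (ρ A * mlog (σ A)).trace).re
      = (∑ j, f A j * Real.log (f A j))
        - ∑ j, ∑ i, f A j * Real.log (e A i) * Complex.normSq (Mz A i j) := by
    rw [htrρ A, htrσ A, ← Complex.ofReal_sub, Complex.ofReal_re]
  rw [hdiff]
  have hlog : ∀ i j : Fin (dA A), Real.log (dval A (i, j))
      = Real.log (q A) - Real.log (p A) + (Real.log (e A i) - Real.log (f A j)) := by
    intro i j
    rw [show dval A (i, j) = q A / p A * (e A i * (f A j)⁻¹) from rfl]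
    rw [Real.log_mul (div_ne_zero (ne_of_gt (hq A)) (ne_of_gt (hp A)))
        (mul_ne_zero (ne_of_gt (hepos A i)) (inv_ne_zero (ne_of_gt (hfpos A j)))),
      Real.log_div (ne_of_gt (hq A)) (ne_of_gt (hp A)),
      Real.log_mul (ne_of_gt (hepos A i)) (inv_ne_zero (ne_of_gt (hfpos A j))),
      Real.log_inv]
    ring
  have hinner : ∀ i j : Fin (dA A), Real.log (dval A (i, j))
      * (p A * (f A j * Complex.normSq (Mz A i j)))
      = (Real.log (q A) - Real.log (p A) - Real.log (f A j)) * (p A * f A j)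
          * Complex.normSq (Mz A i j)
        + p A * (f A j * Real.log (e A i) * Complex.normSq (Mz A i j)) := by
    intro i j
    rw [hlog i j]
    ring
  rw [Finset.sum_congr rfl (fun i _ => Finset.sum_congr rfl (fun j _ => hinner i j))]
  rw [Finset.sum_comm]
  -- now Σ_j Σ_i (... + ...)
  have hstep : ∀ j, (∑ i, ((Real.log (q A) - Real.log (p A) - Real.log (f A j))
        * (p A * f A j) * Complex.normSq (Mz A i j)
        + p A * (f A j * Real.log (e A i) * Complex.normSq (Mz A i j))))
      = (Real.log (q A) - Real.log (p A) - Real.log (f A j)) * (p A * f A j)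
        + p A * ∑ i, f A j * Real.log (e A i) * Complex.normSq (Mz A i j) := by
    intro j
    rw [Finset.sum_add_distrib, ← Finset.mul_sum, hcol A j, mul_one, ← Finset.mul_sum]
  rw [Finset.sum_congr rfl (fun j _ => hstep j), Finset.sum_add_distrib, ← Finset.mul_sum]
  have hfirst : (∑ j, (Real.log (q A) - Real.log (p A) - Real.log (f A j)) * (p A * f A j))
      = (Real.log (q A) - Real.log (p A)) * p A - p A * ∑ j, f A j * Real.log (f A j) := by
    have h5 : ∀ j, (Real.log (q A) - Real.log (p A) - Real.log (f A j)) * (p A * f A j)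
        = (Real.log (q A) - Real.log (p A)) * p A * f A j
          - p A * (f A j * Real.log (f A j)) := by
      intro j
      ring
    rw [Finset.sum_congr rfl (fun j _ => h5 j), Finset.sum_sub_distrib, ← Finset.mul_sum,
      hfs A, mul_one, ← Finset.mul_sum]
  rw [hfirst]
  rw [Real.log_div (ne_of_gt (hp A)) (ne_of_gt (hq A))]
  ring
end
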